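/- arXiv:2507.01425 — 9 statements merged into one kernel-verified Lean document; each statement's English description precedes it below -/
import Mathlib

section
/- A rack is connected if and only if it is indecomposable. That is, for a rack (R,⊳), the inner automorphism group Inn(R) acts transitively on R if and only if R is nonempty and admits no decomposition into two disjoint nonempty subracks. -/
open Quandles

/-- A subrack of a rack `R`: a subset `S` with `ℓ_s(S) = S` for all `s ∈ S`. -/
def IsSubrack {R : Type*} [Rack R] (S : Set R) : Prop :=
  ∀ s ∈ S, (fun b => s ◃ b) '' S = S

/-- The inner automorphism group of a rack: the subgroup of permutations generated by
the left multiplications. -/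
def Inn (R : Type*) [Rack R] : Subgroup (Equiv.Perm R) :=
  Subgroup.closure (Set.range (Rack.act' : R → R ≃ R))

/-- A rack is connected if its inner automorphism group acts transitively on it,
i.e. there is exactly one orbit. -/
def IsConnectedRack (R : Type*) [Rack R] : Prop :=
  Nonempty R ∧ ∀ x y : R, ∃ g ∈ Inn R, g x = y

/-- A decomposition of a rack into two disjoint nonempty subracks. -/
structure IsDecomposition (R : Type*) [Rack R] (S T : Set R) : Prop where
  subrack_left : IsSubrack S
  subrack_right : IsSubrack T
  nonempty_left : S.Nonempty
  nonempty_right : T.Nonempty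
  disjoint : Disjoint S T
  union : S ∪ T = Set.univ

/-- Two shelves (racks, quandles) are isomorphic if there is a structure-preserving
bijection between them. -/
def RackIsomorphic (A B : Type*) [Shelf A] [Shelf B] : Prop :=
  ∃ e : A ≃ B, ∀ x y : A, e (x ◃ y) = e x ◃ e y

/-- The permutation rack on a set `R` given by a permutation `π`: `a ◃ b = π b`. -/
def permRack {R : Type*} (π : Equiv.Perm R) : Rack R where
  act _ b := π b
  self_distrib := rfl
  invAct _ b := π.symm b
  left_inv _ b := π.symm_apply_apply b
  right_inv _ b := π.apply_symm_apply b

/-- The product of two racks, with componentwise operation. -/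
instance prodRack {A B : Type*} [Rack A] [Rack B] : Rack (A × B) where
  act x y := (x.1 ◃ y.1, x.2 ◃ y.2)
  self_distrib := by
    intro x y z
    dsimp only
    rw [Shelf.self_distrib (x := x.1), Shelf.self_distrib (x := x.2)]
  invAct x y := (x.1 ◃⁻¹ y.1, x.2 ◃⁻¹ y.2)
  left_inv x y := by
    dsimp only
    rw [Rack.left_inv x.1 y.1, Rack.left_inv x.2 y.2]
  right_inv x y := by
    dsimp only
    rw [Rack.right_inv x.1 y.1, Rack.right_inv x.2 y.2]

/-- A subrack, with its induced rack structure. -/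
def Subrack.rack {R : Type*} [Rack R] (S : Set R) (hS : IsSubrack S) : Rack S where
  act x y := ⟨x.1 ◃ y.1, by
    have h := hS x.1 x.2
    exact (Set.ext_iff.mp h (x.1 ◃ y.1)).mp ⟨y.1, y.2, rfl⟩⟩
  self_distrib := by
    intro x y z
    exact Subtype.ext Shelf.self_distrib
  invAct x y := ⟨x.1 ◃⁻¹ y.1, by
    have h := hS x.1 x.2
    have hy : (y : R) ∈ (fun b => x.1 ◃ b) '' S := (Set.ext_iff.mp h y.1).mpr y.2
    obtain ⟨u, hu, hequ⟩ := hy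
    have : x.1 ◃⁻¹ (y : R) = u := by
      rw [← hequ]; exact Rack.left_inv x.1 u
    rw [this]; exact hu⟩
  left_inv x y := Subtype.ext (Rack.left_inv x.1 y.1)
  right_inv x y := Subtype.ext (Rack.right_inv x.1 y.1)

lemma inn_image_eq {R : Type*} [Rack R] {S : Set R}
    (hS : ∀ a : R, (⇑(Rack.act' a)) '' S = S) :
    ∀ g ∈ Inn R, g '' S = S := by
  intro g hg
  refine Subgroup.closure_induction ?_ ?_ ?_ ?_ hg
  · rintro x ⟨a, rfl⟩
    exact hS a
  · simp
  · intro x y _ _ hx hy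
    have : ⇑(x * y) = ⇑x ∘ ⇑y := rfl
    rw [this, Set.image_comp, hy, hx]
  · intro x _ hx
    have := congrArg (fun s => ⇑x⁻¹ '' s) hx
    simpa [Set.image_image] using this.symm

/-- A rack is connected (its inner automorphism group acts transitively,
i.e. has a single orbit) if and only if it is indecomposable (nonempty and admitting no
decomposition into two disjoint nonempty subracks). -/
theorem connected_iff_indecomposable (R : Type*) [Rack R] :
    (Nonempty R ∧ ∀ x y : R, ∃ g ∈ Inn R, g x = y) ↔
      (Nonempty R ∧ ¬ ∃ S T : Set R, IsDecomposition R S T) := by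
  constructor
  · rintro ⟨hne, htrans⟩
    refine ⟨hne, ?_⟩
    rintro ⟨S, T, hd⟩
    have hTS : T = Sᶜ := by
      ext x
      constructor
      · intro hx hxS
        exact Set.disjoint_left.mp hd.disjoint hxS hx
      · intro hx
        rcases (Set.eq_univ_iff_forall.mp hd.union x) with h | h
        · exact absurd h hx
        · exact h
    have hS : ∀ a : R, (⇑(Rack.act' a)) '' S = S := by
      intro a
      rcases (Set.eq_univ_iff_forall.mp hd.union a) with ha | ha
      · exact hd.subrack_left a ha
      · have hT : (⇑(Rack.act' a)) '' T = T := hd.subrack_right a ha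
        have hbij : Function.Bijective (⇑(Rack.act' a)) := (Rack.act' a).bijective
        have := congrArg compl hT
        rw [← Set.image_compl_eq hbij] at this
        rwa [hTS, compl_compl] at this
    obtain ⟨s, hs⟩ := hd.nonempty_left
    obtain ⟨t, ht⟩ := hd.nonempty_right
    obtain ⟨g, hg, hgst⟩ := htrans s t
    have : t ∈ S := by
      rw [← inn_image_eq hS g hg]
      exact ⟨s, hs, hgst⟩
    exact Set.disjoint_left.mp hd.disjoint this ht
  · rintro ⟨hne, hnd⟩
    refine ⟨hne, ?_⟩
    obtain ⟨x⟩ := hne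
    set S : Set R := {y | ∃ g ∈ Inn R, g y = x} with hSdef
    have hinv : ∀ g ∈ Inn R, g '' S = S := by
      intro g hg
      ext y
      constructor
      · rintro ⟨z, ⟨h, hh, hhz⟩, rfl⟩
        exact ⟨h * g⁻¹, mul_mem hh (inv_mem hg), by simp [hhz]⟩
      · rintro ⟨h, hh, hhy⟩
        exact ⟨g⁻¹ y, ⟨h * g, mul_mem hh hg, by simp [hhy]⟩, by simp⟩
    have hSsub : IsSubrack S := by
      intro s _
      exact hinv (Rack.act' s) (Subgroup.subset_closure ⟨s, rfl⟩)
    have hScsub : IsSubrack Sᶜ := by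
      intro t _
      have hS : (⇑(Rack.act' t)) '' S = S :=
        hinv (Rack.act' t) (Subgroup.subset_closure ⟨t, rfl⟩)
      have := congrArg compl hS
      rwa [← Set.image_compl_eq (Rack.act' t).bijective] at this
    have hSc : Sᶜ = ∅ := by
      by_contra h
      exact hnd ⟨S, Sᶜ, hSsub, hScsub, ⟨x, 1, one_mem _, rfl⟩,
        Set.nonempty_iff_ne_empty.mpr h, disjoint_compl_right, Set.union_compl_self S⟩
    have hSuniv : S = Set.univ := by
      rw [← compl_compl S, hSc, Set.compl_empty]
    intro a b
    obtain ⟨g, hg, hga⟩ : a ∈ S := hSuniv ▸ Set.mem_univ a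
    obtain ⟨h, hh, hhb⟩ : b ∈ S := hSuniv ▸ Set.mem_univ b
    exact ⟨h⁻¹ * g, mul_mem (inv_mem hh) hg, by simp [hga, ← hhb]⟩
end

section
/- Let R and S be finite connected racks, and let T be a finite rack containing an element t with t ⊳ t = t (for example, a nonempty quandle). If the product racks R × T and S × T are isomorphic, then R and S are isomorphic. -/
open Quandles

section LovaszMachinery

universe u v w

/-- Shelf homomorphisms. -/
def SHom (X A : Type*) [Shelf X] [Shelf A] : Type _ :=
  {f : X → A // ∀ x y, f (x ◃ y) = f x ◃ f y}

/-- Injective shelf homomorphisms. -/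
def SInj (X A : Type*) [Shelf X] [Shelf A] : Type _ :=
  {f : X → A // (∀ x y, f (x ◃ y) = f x ◃ f y) ∧ Function.Injective f}

instance {X A : Type*} [Shelf X] [Shelf A] [Finite X] [Finite A] : Finite (SHom X A) :=
  Subtype.finite

instance {X A : Type*} [Shelf X] [Shelf A] [Finite X] [Finite A] : Finite (SInj X A) :=
  Subtype.finite

/-- Shelf congruences on `X`. -/
def Cong (X : Type*) [Shelf X] : Type _ :=
  {θ : Setoid X // ∀ ⦃a b c d⦄, θ a b → θ c d → θ (a ◃ c) (b ◃ d)}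

instance {X : Type*} [Finite X] : Finite (Setoid X) :=
  Finite.of_injective (fun s => s.r) (fun s t h => by cases s; cases t; cases h; rfl)

instance {X : Type*} [Shelf X] [Finite X] : Finite (Cong X) := Subtype.finite

noncomputable instance {X : Type*} [Shelf X] [Finite X] : Fintype (Cong X) :=
  Fintype.ofFinite _

instance quotShelf {X : Type*} [Shelf X] (θ : Cong X) : Shelf (Quotient θ.1) where
  act x y := Quotient.lift₂ (fun a b => Quotient.mk θ.1 (a ◃ b))
    (fun _ _ _ _ hac hbd => Quotient.sound (θ.2 hac hbd)) x y
  self_distrib := by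
    intro x y z
    induction x using Quotient.ind
    induction y using Quotient.ind
    induction z using Quotient.ind
    exact congrArg (Quotient.mk θ.1) Shelf.self_distrib

@[simp] lemma quot_act_mk {X : Type*} [Shelf X] (θ : Cong X) (a b : X) :
    (Quotient.mk θ.1 a ◃ Quotient.mk θ.1 b) = Quotient.mk θ.1 (a ◃ b) := rfl

/-- The kernel congruence of a shelf homomorphism. -/
def kerCong {X A : Type*} [Shelf X] [Shelf A] (f : SHom X A) : Cong X :=
  ⟨Setoid.ker f.1, fun a b c d hab hcd => by
    have hab' : f.1 a = f.1 b := hab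
    have hcd' : f.1 c = f.1 d := hcd
    show f.1 (a ◃ c) = f.1 (b ◃ d)
    rw [f.2, f.2, hab', hcd']⟩

/-- Homomorphisms with kernel `θ` correspond to injective homomorphisms from the quotient. -/
def fiberEquiv {X A : Type*} [Shelf X] [Shelf A] (θ : Cong X) :
    {f : SHom X A // kerCong f = θ} ≃ SInj (Quotient θ.1) A where
  toFun p := ⟨Quotient.lift p.1.1 (fun a b hab => by
      have h : θ.1 = Setoid.ker p.1.1 := (congrArg Subtype.val p.2).symm
      exact (h ▸ hab : Setoid.ker p.1.1 a b)), by
    constructor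
    · intro x y
      induction x using Quotient.ind
      induction y using Quotient.ind
      exact p.1.2 _ _
    · intro x y h
      induction x using Quotient.ind
      induction y using Quotient.ind
      refine Quotient.sound ?_
      have h' : Setoid.ker p.1.1 = θ.1 := congrArg Subtype.val p.2
      exact (h' ▸ (h : Setoid.ker p.1.1 _ _))⟩
  invFun g := ⟨⟨fun x => g.1 (Quotient.mk θ.1 x), fun x y => g.2.1 (Quotient.mk θ.1 x) (Quotient.mk θ.1 y)⟩, by
    apply Subtype.ext
    apply Setoid.ext
    intro a b
    constructor
    · intro h
      exact Quotient.exact (g.2.2 (h : g.1 _ = g.1 _))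
    · intro h
      exact congrArg g.1 (Quotient.sound h)⟩
  left_inv p := Subtype.ext (Subtype.ext rfl)
  right_inv g := by
    apply Subtype.ext
    funext x
    induction x using Quotient.ind
    rfl

lemma card_shom_eq_sum {X A : Type*} [Shelf X] [Shelf A] [Finite X] [Finite A] :
    Nat.card (SHom X A) = ∑ θ : Cong X, Nat.card (SInj (Quotient θ.1) A) := by
  classical
  have e1 : SHom X A ≃ Σ θ : Cong X, {f : SHom X A // kerCong f = θ} :=
    Equiv.sigmaFiberEquiv kerCong |>.symm
  rw [Nat.card_congr e1]
  letI : ∀ θ : Cong X, Fintype {f : SHom X A // kerCong f = θ} := fun θ => Fintype.ofFinite _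
  rw [Nat.card_eq_fintype_card, Fintype.card_sigma]
  refine Finset.sum_congr rfl (fun θ _ => ?_)
  rw [← Nat.card_eq_fintype_card, Nat.card_congr (fiberEquiv θ)]

/-- The diagonal (bottom) congruence. -/
def botCong (X : Type*) [Shelf X] : Cong X :=
  ⟨⊥, fun a b c d hab hcd => by
    have hab' : a = b := hab
    have hcd' : c = d := hcd
    subst hab'; subst hcd'
    exact Setoid.refl' ⊥ _⟩

/-- A shelf isomorphism induces a bijection on injective homomorphisms. -/
def sinjCongr {X Y A : Type*} [Shelf X] [Shelf Y] [Shelf A]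
    (e : X ≃ Y) (he : ∀ x y, e (x ◃ y) = e x ◃ e y) : SInj X A ≃ SInj Y A where
  toFun f := ⟨f.1 ∘ e.symm, fun x y => by
      have : e.symm (x ◃ y) = e.symm x ◃ e.symm y := by
        apply e.injective
        rw [he, e.apply_symm_apply, e.apply_symm_apply, e.apply_symm_apply]
      simp only [Function.comp_apply, this, f.2.1],
    f.2.2.comp e.symm.injective⟩
  invFun f := ⟨f.1 ∘ e, fun x y => by simp only [Function.comp_apply, he, f.2.1],
    f.2.2.comp e.injective⟩
  left_inv f := by apply Subtype.ext; funext x; simp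
  right_inv f := by apply Subtype.ext; funext x; simp

def botQuotEquiv (X : Type*) [Shelf X] : X ≃ Quotient (botCong X).1 where
  toFun := Quotient.mk _
  invFun := Quotient.lift id (fun a b h => h)
  left_inv x := rfl
  right_inv x := by induction x using Quotient.ind; rfl

lemma card_sinj_botCong {X A : Type*} [Shelf X] [Shelf A] :
    Nat.card (SInj (Quotient (botCong X).1) A) = Nat.card (SInj X A) :=
  (Nat.card_congr (sinjCongr (botQuotEquiv X) (fun _ _ => rfl))).symm

lemma card_quot_lt {X : Type*} [Shelf X] [Finite X] (θ : Cong X) (h : θ ≠ botCong X) :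
    Nat.card (Quotient θ.1) < Nat.card X := by
  classical
  obtain ⟨a, b, hab, hne⟩ : ∃ a b, θ.1 a b ∧ a ≠ b := by
    by_contra hc
    push_neg at hc
    apply h
    apply Subtype.ext
    apply Setoid.ext
    intro x y
    constructor
    · intro hxy; exact hc x y hxy
    · rintro rfl; exact Setoid.refl' _ _
  letI : Fintype X := Fintype.ofFinite X
  letI : Fintype (Quotient θ.1) := Fintype.ofFinite _
  rw [Nat.card_eq_fintype_card, Nat.card_eq_fintype_card]
  refine Fintype.card_lt_of_surjective_not_injective (Quotient.mk θ.1)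
    (fun q => Quotient.exists_rep q) (fun hinj => hne (hinj (Quotient.sound hab)))

lemma inj_card_eq {A B : Type u} [Shelf A] [Shelf B] [Finite A] [Finite B]
    (hhom : ∀ (X : Type u) [Shelf X] [Finite X],
      Nat.card (SHom X A) = Nat.card (SHom X B)) :
    ∀ (X : Type u) [Shelf X] [Finite X], Nat.card (SInj X A) = Nat.card (SInj X B) := by
  suffices H : ∀ (n : ℕ) (X : Type u) [Shelf X] [Finite X], Nat.card X = n →
      Nat.card (SInj X A) = Nat.card (SInj X B) by
    intro X _ _
    exact H (Nat.card X) X rfl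
  intro n
  induction n using Nat.strong_induction_on with
  | _ n ih =>
    intro X _ _ hX
    classical
    have hA := card_shom_eq_sum (X := X) (A := A)
    have hB := card_shom_eq_sum (X := X) (A := B)
    rw [← Finset.add_sum_erase Finset.univ _ (Finset.mem_univ (botCong X))] at hA hB
    have hsum : ∑ θ ∈ Finset.univ.erase (botCong X), Nat.card (SInj (Quotient θ.1) A)
        = ∑ θ ∈ Finset.univ.erase (botCong X), Nat.card (SInj (Quotient θ.1) B) := by
      refine Finset.sum_congr rfl (fun θ hθ => ?_)
      have hlt : Nat.card (Quotient θ.1) < n :=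
        hX ▸ card_quot_lt θ (Finset.ne_of_mem_erase hθ)
      exact ih _ hlt (Quotient θ.1) rfl
    have := hhom X
    rw [hA, hB, hsum] at this
    have := Nat.add_right_cancel this
    rwa [card_sinj_botCong, card_sinj_botCong] at this

lemma lovasz {A B : Type u} [Shelf A] [Shelf B] [Finite A] [Finite B]
    (hhom : ∀ (X : Type u) [Shelf X] [Finite X],
      Nat.card (SHom X A) = Nat.card (SHom X B)) :
    RackIsomorphic A B := by
  have h1 : Nat.card (SInj A A) = Nat.card (SInj A B) := inj_card_eq hhom A
  have h2 : Nat.card (SInj B A) = Nat.card (SInj B B) := inj_card_eq hhom B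
  have nA : Nonempty (SInj A A) := ⟨⟨id, fun _ _ => rfl, Function.injective_id⟩⟩
  have nB : Nonempty (SInj B B) := ⟨⟨id, fun _ _ => rfl, Function.injective_id⟩⟩
  have pAB : 0 < Nat.card (SInj A B) := h1 ▸ Nat.card_pos
  have pBA : 0 < Nat.card (SInj B A) := h2.symm ▸ Nat.card_pos
  obtain ⟨f⟩ := (Nat.card_pos_iff.mp pAB).1
  obtain ⟨g⟩ := (Nat.card_pos_iff.mp pBA).1
  have hcard : Nat.card A = Nat.card B :=
    le_antisymm (Nat.card_le_card_of_injective f.1 f.2.2)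
      (Nat.card_le_card_of_injective g.1 g.2.2)
  have hbij : Function.Bijective f.1 :=
    (Nat.bijective_iff_injective_and_card f.1).mpr ⟨f.2.2, hcard⟩
  exact ⟨Equiv.ofBijective f.1 hbij, f.2.1⟩


instance uliftShelf {R : Type u} [Shelf R] : Shelf (ULift.{v} R) where
  act a b := ⟨a.down ◃ b.down⟩
  self_distrib := by
    intro x y z
    exact congrArg ULift.up Shelf.self_distrib

/-- Post-composition with a shelf isomorphism. -/
def shomCongrRight {X A B : Type*} [Shelf X] [Shelf A] [Shelf B] (e : A ≃ B)
    (he : ∀ x y, e (x ◃ y) = e x ◃ e y) : SHom X A ≃ SHom X B where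
  toFun f := ⟨e ∘ f.1, fun x y => by simp only [Function.comp_apply, f.2, he]⟩
  invFun f := ⟨e.symm ∘ f.1, fun x y => by
    have hs : ∀ a b, e.symm (a ◃ b) = e.symm a ◃ e.symm b := fun a b => by
      apply e.injective
      rw [he, e.apply_symm_apply, e.apply_symm_apply, e.apply_symm_apply]
    simp only [Function.comp_apply, f.2, hs]⟩
  left_inv f := by apply Subtype.ext; funext x; simp
  right_inv f := by apply Subtype.ext; funext x; simp

/-- Homomorphisms into a product rack split componentwise. -/
def shomProdEquiv {X A B : Type*} [Shelf X] [Rack A] [Rack B] :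
    SHom X (A × B) ≃ SHom X A × SHom X B where
  toFun f := (⟨fun x => (f.1 x).1, fun x y => congrArg Prod.fst (f.2 x y)⟩,
              ⟨fun x => (f.1 x).2, fun x y => congrArg Prod.snd (f.2 x y)⟩)
  invFun p := ⟨fun x => (p.1.1 x, p.2.1 x), fun x y => by
    have h1 := p.1.2 x y
    have h2 := p.2.2 x y
    exact Prod.ext h1 h2⟩
  left_inv f := Subtype.ext rfl
  right_inv p := rfl

lemma rackIso_of_ulift {R : Type u} {S : Type v} [Shelf R] [Shelf S]
    (h : RackIsomorphic (ULift.{v} R) (ULift.{u} S)) : RackIsomorphic R S := by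
  obtain ⟨e, he⟩ := h
  exact ⟨(Equiv.ulift.symm.trans e).trans Equiv.ulift,
    fun x y => congrArg ULift.down (he ⟨x⟩ ⟨y⟩)⟩

lemma rack_cancellation_aux {R : Type u} {S : Type v} {T : Type w}
    [Rack R] [Rack S] [Rack T] [Finite R] [Finite S] [Finite T]
    (t : T) (ht : t ◃ t = t)
    (h : RackIsomorphic (R × T) (S × T)) : RackIsomorphic R S := by
  obtain ⟨e, he⟩ := h
  apply rackIso_of_ulift
  apply lovasz
  intro X _ _
  have hR : Nat.card (SHom X (ULift.{v} R)) = Nat.card (SHom X R) :=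
    Nat.card_congr (shomCongrRight Equiv.ulift (fun _ _ => rfl))
  have hS : Nat.card (SHom X (ULift.{u} S)) = Nat.card (SHom X S) :=
    Nat.card_congr (shomCongrRight Equiv.ulift (fun _ _ => rfl))
  have hT : 0 < Nat.card (SHom X T) := by
    have : Nonempty (SHom X T) := ⟨⟨fun _ => t, fun _ _ => ht.symm⟩⟩
    exact Nat.card_pos
  have key : Nat.card (SHom X R) * Nat.card (SHom X T)
      = Nat.card (SHom X S) * Nat.card (SHom X T) := by
    rw [← Nat.card_prod, ← Nat.card_prod,
      ← Nat.card_congr (shomProdEquiv (X := X) (A := R) (B := T)),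
      ← Nat.card_congr (shomProdEquiv (X := X) (A := S) (B := T))]
    exact Nat.card_congr (shomCongrRight e he)
  rw [hR, hS]
  exact Nat.eq_of_mul_eq_mul_right hT key

end LovaszMachinery

/-- Cancellation: if `R` and `S` are finite connected racks and `T` is a finite
rack containing an element `t` with `t ◃ t = t`, then `R × T ≅ S × T` implies `R ≅ S`. -/
theorem rack_cancellation {R S T : Type*} [Rack R] [Rack S] [Rack T]
    [Fintype R] [Fintype S] [Fintype T]
    (hR : IsConnectedRack R) (hS : IsConnectedRack S)
    (t : T) (ht : t ◃ t = t)
    (h : RackIsomorphic (R × T) (S × T)) :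
    RackIsomorphic R S :=
  rack_cancellation_aux t ht h
end

section
/- Let R be a finite rack admitting two decompositions R = S₁ ∪ T₁ and R = S₂ ∪ T₂, each into two disjoint nonempty subracks. If there is a rack isomorphism T₁ ≅ T₂ and the subracks S₁ and S₂ are connected, then there is a rack isomorphism S₁ ≅ S₂. -/
open Quandles

theorem RackIsomorphic.refl' (A : Type*) [Shelf A] : RackIsomorphic A A :=
  ⟨Equiv.refl A, fun _ _ => rfl⟩

theorem RackIsomorphic.symm' {A B : Type*} [Shelf A] [Shelf B] (h : RackIsomorphic A B) :
    RackIsomorphic B A := by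
  obtain ⟨e, he⟩ := h
  refine ⟨e.symm, fun x y => e.injective ?_⟩
  rw [Equiv.apply_symm_apply, he, Equiv.apply_symm_apply, Equiv.apply_symm_apply]

theorem RackIsomorphic.trans' {A B C : Type*} [Shelf A] [Shelf B] [Shelf C]
    (h1 : RackIsomorphic A B) (h2 : RackIsomorphic B C) : RackIsomorphic A C := by
  obtain ⟨e, he⟩ := h1; obtain ⟨f, hf⟩ := h2
  exact ⟨e.trans f, fun x y => by simp [Equiv.trans_apply, he, hf]⟩

theorem inn_pred {A : Type*} [Rack A] (P : A → Prop) (hP : ∀ a x, P (a ◃ x) ↔ P x) :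
    ∀ g ∈ Inn A, ∀ x, P (g x) ↔ P x := by
  intro g hg
  refine Subgroup.closure_induction (p := fun g _ => ∀ x, P (g x) ↔ P x) ?_ ?_ ?_ ?_ hg
  · rintro _ ⟨a, rfl⟩ x; exact hP a x
  · intro x; exact Iff.rfl
  · intro g h _ _ hgP hhP x
    exact (hgP (h x)).trans (hhP x)
  · intro g _ hgP x
    have := (hgP (g⁻¹ x)).symm
    rwa [show g (g⁻¹ x) = x from g.apply_symm_apply x] at this

theorem connected_pred {A : Type*} [Rack A] (hc : IsConnectedRack A) (P : A → Prop)
    (hP : ∀ a x, P (a ◃ x) ↔ P x) {x y : A} (hx : P x) : P y := by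
  obtain ⟨g, hg, hgx⟩ := hc.2 x y
  exact hgx ▸ ((inn_pred P hP g hg x).mpr hx)

theorem mem_iff_act_mem {R : Type*} [Rack R] {A : Set R} {s : R}
    (h : (fun b => s ◃ b) '' A = A) (x : R) : s ◃ x ∈ A ↔ x ∈ A := by
  constructor
  · intro hx
    rw [← h] at hx
    obtain ⟨u, hu, hequ⟩ := hx
    have hux : u = x := by
      have := congrArg (fun z => s ◃⁻¹ z) hequ
      simpa [Rack.left_inv] using this
    exact hux ▸ hu
  · intro hx; rw [← h]; exact ⟨x, hx, rfl⟩

theorem IsDecomposition.symm {R : Type*} [Rack R] {S T : Set R}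
    (h : IsDecomposition R S T) : IsDecomposition R T S :=
  ⟨h.subrack_right, h.subrack_left, h.nonempty_right, h.nonempty_left, h.disjoint.symm,
    by rw [Set.union_comm]; exact h.union⟩

theorem IsDecomposition.mem_left_iff {R : Type*} [Rack R] {S T : Set R}
    (h : IsDecomposition R S T) (x : R) : x ∈ S ↔ x ∉ T := by
  constructor
  · intro hx hT; exact Set.disjoint_left.mp h.disjoint hx hT
  · intro hT
    have hx : x ∈ S ∪ T := h.union ▸ Set.mem_univ x
    exact hx.resolve_right hT

theorem IsDecomposition.act_mem_left_iff {R : Type*} [Rack R] {S T : Set R}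
    (h : IsDecomposition R S T) (a x : R) : a ◃ x ∈ S ↔ x ∈ S := by
  have ha : a ∈ S ∪ T := h.union ▸ Set.mem_univ a
  rcases ha with ha | ha
  · exact mem_iff_act_mem (h.subrack_left a ha) x
  · rw [h.mem_left_iff, h.mem_left_iff, not_iff_not]
    exact mem_iff_act_mem (h.subrack_right a ha) x

theorem IsDecomposition.act_mem_right_iff {R : Type*} [Rack R] {S T : Set R}
    (h : IsDecomposition R S T) (a x : R) : a ◃ x ∈ T ↔ x ∈ T :=
  h.symm.act_mem_left_iff a x

theorem isSubrack_of_invariant {A : Type*} [Rack A] {P : Set A}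
    (h : ∀ a x : A, a ◃ x ∈ P ↔ x ∈ P) : IsSubrack P := by
  intro s _
  ext y
  constructor
  · rintro ⟨x, hx, rfl⟩; exact (h s x).mpr hx
  · intro hy
    exact ⟨s ◃⁻¹ y, (h s _).mp (by rwa [Rack.right_inv]), Rack.right_inv s y⟩

def SubIso {R R' : Type*} [Rack R] [Rack R'] (S : Set R) (hS : IsSubrack S)
    (S' : Set R') (hS' : IsSubrack S') : Prop :=
  @RackIsomorphic ↥S ↥S' (Subrack.rack S hS).toShelf (Subrack.rack S' hS').toShelf

def SubConn {R : Type*} [Rack R] (S : Set R) (hS : IsSubrack S) : Prop :=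
  @IsConnectedRack ↥S (Subrack.rack S hS)

theorem SubIso.symm {R R' : Type*} [Rack R] [Rack R'] {S : Set R} {hS : IsSubrack S}
    {S' : Set R'} {hS' : IsSubrack S'} (h : SubIso S hS S' hS') : SubIso S' hS' S hS :=
  @RackIsomorphic.symm' ↥S ↥S' (Subrack.rack S hS).toShelf (Subrack.rack S' hS').toShelf h

theorem SubIso.trans {R R' R'' : Type*} [Rack R] [Rack R'] [Rack R'']
    {S : Set R} {hS : IsSubrack S} {S' : Set R'} {hS' : IsSubrack S'}
    {S'' : Set R''} {hS'' : IsSubrack S''}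
    (h : SubIso S hS S' hS') (h' : SubIso S' hS' S'' hS'') : SubIso S hS S'' hS'' :=
  @RackIsomorphic.trans' ↥S ↥S' ↥S'' (Subrack.rack S hS).toShelf (Subrack.rack S' hS').toShelf (Subrack.rack S'' hS'').toShelf h h'

theorem subIso_of_eq {R : Type*} [Rack R] {S S' : Set R} (h : S = S') (hS : IsSubrack S)
    (hS' : IsSubrack S') : SubIso S hS S' hS' := by
  subst h
  exact ⟨Equiv.refl _, fun _ _ => rfl⟩

theorem connected_of_iso {A B : Type*} [Rack A] [Rack B] (e : A ≃ B)
    (he : ∀ x y, e (x ◃ y) = e x ◃ e y) (hA : IsConnectedRack A) : IsConnectedRack B := by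
  obtain ⟨hne, htrans⟩ := hA
  refine ⟨⟨e hne.some⟩, ?_⟩
  have key : ∀ g ∈ Inn A, ∃ g' ∈ Inn B, ∀ x, g' (e x) = e (g x) := by
    intro g hg
    refine Subgroup.closure_induction
      (p := fun g _ => ∃ g' ∈ Inn B, ∀ x, g' (e x) = e (g x)) ?_ ?_ ?_ ?_ hg
    · rintro _ ⟨a, rfl⟩
      exact ⟨Rack.act' (e a), Subgroup.subset_closure ⟨e a, rfl⟩, fun x => (he a x).symm⟩
    · exact ⟨1, one_mem _, fun _ => rfl⟩
    · rintro g h _ _ ⟨g', hg', hgf⟩ ⟨h', hh', hhf⟩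
      refine ⟨g' * h', mul_mem hg' hh', fun x => ?_⟩
      rw [Equiv.Perm.mul_apply, Equiv.Perm.mul_apply, hhf, hgf]
    · rintro g _ ⟨g', hg', hgf⟩
      refine ⟨g'⁻¹, inv_mem hg', fun x => ?_⟩
      have := hgf (g⁻¹ x)
      rw [show g (g⁻¹ x) = x from g.apply_symm_apply x] at this
      rw [← this, show ∀ y, g'⁻¹ (g' y) = y from g'.symm_apply_apply]
  intro x y
  obtain ⟨g, hg, hgx⟩ := htrans (e.symm x) (e.symm y)
  obtain ⟨g', hg', hf⟩ := key g hg
  refine ⟨g', hg', ?_⟩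
  have hfx := hf (e.symm x)
  rw [Equiv.apply_symm_apply, hgx, Equiv.apply_symm_apply] at hfx
  exact hfx

theorem SubConn.ofIso {R R' : Type*} [Rack R] [Rack R'] {S : Set R} {hS : IsSubrack S}
    {S' : Set R'} {hS' : IsSubrack S'} (h : SubIso S hS S' hS') (hc : SubConn S hS) :
    SubConn S' hS' := by
  obtain ⟨e, he⟩ := h
  exact @connected_of_iso _ _ (Subrack.rack S hS) (Subrack.rack S' hS') e he hc

theorem isSubrack_image {A B : Type*} [Rack A] [Rack B] (e : A ≃ B)
    (he : ∀ x y, e (x ◃ y) = e x ◃ e y) {S : Set A} (hS : IsSubrack S) :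
    IsSubrack (⇑e '' S) := by
  rintro _ ⟨s, hs, rfl⟩
  have himg : (fun b => e s ◃ b) '' (⇑e '' S) = ⇑e '' ((fun b => s ◃ b) '' S) := by
    rw [Set.image_image, Set.image_image]
    exact Set.image_congr (fun x _ => (he s x).symm)
  rw [himg, hS s hs]

theorem subIso_image {A B : Type*} [Rack A] [Rack B] (e : A ≃ B)
    (he : ∀ x y, e (x ◃ y) = e x ◃ e y) {S : Set A} (hS : IsSubrack S)
    (hS' : IsSubrack (⇑e '' S)) : SubIso S hS (⇑e '' S) hS' := by
  refine ⟨⟨fun x => ⟨e x.1, ⟨x.1, x.2, rfl⟩⟩,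
    fun y => ⟨e.symm y.1, by
      obtain ⟨u, hu, heu⟩ := y.2
      rw [← heu, e.symm_apply_apply]; exact hu⟩,
    fun x => Subtype.ext (e.symm_apply_apply x.1),
    fun y => Subtype.ext (e.apply_symm_apply y.1)⟩,
    fun x y => Subtype.ext (he x.1 y.1)⟩

theorem subIso_preimage {R : Type*} [Rack R] {S T : Set R} (hT : IsSubrack T)
    (hST : IsSubrack (S ∩ T))
    (hS' : @IsSubrack ↥T (Subrack.rack T hT) (Subtype.val ⁻¹' S)) :
    @SubIso R ↥T _ (Subrack.rack T hT) (S ∩ T) hST (Subtype.val ⁻¹' S) hS' := by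
  letI : Rack ↥T := Subrack.rack T hT
  letI : Shelf ↥(S ∩ T) := (Subrack.rack (S ∩ T) hST).toShelf
  letI : Shelf ↥(Subtype.val ⁻¹' S : Set ↥T) := (Subrack.rack _ hS').toShelf
  refine ⟨⟨fun x => ⟨⟨x.1, x.2.2⟩, x.2.1⟩, fun y => ⟨y.1.1, ⟨y.2, y.1.2⟩⟩,
    fun x => rfl, fun y => rfl⟩, fun x y => rfl⟩

theorem dichotomy {R : Type*} [Rack R] {S₁ T₁ S₂ T₂ : Set R}
    (h₁ : IsDecomposition R S₁ T₁) (h₂ : IsDecomposition R S₂ T₂)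
    (hc : SubConn S₁ h₁.subrack_left) : S₁ ⊆ S₂ ∨ S₁ ⊆ T₂ := by
  letI : Rack ↥S₁ := Subrack.rack S₁ h₁.subrack_left
  obtain ⟨x₀, hx₀⟩ := h₁.nonempty_left
  by_cases hx : x₀ ∈ S₂
  · left
    intro y hy
    exact connected_pred hc (fun z : ↥S₁ => (z : R) ∈ S₂)
      (fun a x => h₂.act_mem_left_iff a.1 x.1) (x := ⟨x₀, hx₀⟩) (y := ⟨y, hy⟩) hx
  · right
    intro y hy
    have hx' : x₀ ∈ T₂ := ((h₂.mem_left_iff x₀).not_left.mp hx)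
    exact connected_pred hc (fun z : ↥S₁ => (z : R) ∈ T₂)
      (fun a x => h₂.act_mem_right_iff a.1 x.1) (x := ⟨x₀, hx₀⟩) (y := ⟨y, hy⟩) hx'

universe u

theorem aux_cancel (n : ℕ) : ∀ (R : Type u) [Rack R] [Finite R] (S₁ T₁ S₂ T₂ : Set R)
    (h₁ : IsDecomposition R S₁ T₁) (h₂ : IsDecomposition R S₂ T₂),
    Nat.card R ≤ n →
    SubIso T₁ h₁.subrack_right T₂ h₂.subrack_right →
    SubConn S₁ h₁.subrack_left → SubConn S₂ h₂.subrack_left →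
    SubIso S₁ h₁.subrack_left S₂ h₂.subrack_left := by
  induction n with
  | zero =>
    intro R _ _ S₁ T₁ S₂ T₂ h₁ h₂ hcard _ _ _
    obtain ⟨x₀, _⟩ := h₁.nonempty_left
    have : Nonempty R := ⟨x₀⟩
    have := Nat.card_pos (α := R)
    omega
  | succ n ih =>
    intro R _ _ S₁ T₁ S₂ T₂ h₁ h₂ hcard hT hS₁ hS₂
    rcases dichotomy h₁ h₂ hS₁ with h12 | h1T
    · rcases dichotomy h₂ h₁ hS₂ with h21 | h2T
      · exact subIso_of_eq (Set.Subset.antisymm h12 h21) _ _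
      · -- S₁ ⊆ S₂ ⊆ T₁ contradicts S₁ disjoint T₁
        obtain ⟨x₀, hx₀⟩ := h₁.nonempty_left
        exact absurd (h2T (h12 hx₀)) ((h₁.mem_left_iff x₀).mp hx₀)
    · rcases dichotomy h₂ h₁ hS₂ with h21 | h2T
      · obtain ⟨x₀, hx₀⟩ := h₂.nonempty_left
        exact absurd (h1T (h21 hx₀)) ((h₂.mem_left_iff x₀).mp hx₀)
      · -- main case : S₁ ⊆ T₂, S₂ ⊆ T₁
        by_cases hU : (T₁ ∩ T₂).Nonempty
        · obtain ⟨φ, hφ⟩ := hT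
          letI rT₁ : Rack ↥T₁ := Subrack.rack T₁ h₁.subrack_right
          letI rT₂ : Rack ↥T₂ := Subrack.rack T₂ h₂.subrack_right
          have hA₁ : IsSubrack (Subtype.val ⁻¹' S₁ : Set ↥T₂) :=
            isSubrack_of_invariant (fun a x => h₁.act_mem_left_iff a.1 x.1)
          have hA₂ : IsSubrack (Subtype.val ⁻¹' T₁ : Set ↥T₂) :=
            isSubrack_of_invariant (fun a x => h₁.act_mem_right_iff a.1 x.1)
          have hB₁ : IsSubrack (Subtype.val ⁻¹' S₂ : Set ↥T₁) :=
            isSubrack_of_invariant (fun a x => h₂.act_mem_left_iff a.1 x.1)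
          have hB₂ : IsSubrack (Subtype.val ⁻¹' T₂ : Set ↥T₁) :=
            isSubrack_of_invariant (fun a x => h₂.act_mem_right_iff a.1 x.1)
          have d : IsDecomposition ↥T₂ (Subtype.val ⁻¹' S₁) (Subtype.val ⁻¹' T₁) := by
            refine ⟨hA₁, hA₂, ?_, ?_, ?_, ?_⟩
            · obtain ⟨x₀, hx₀⟩ := h₁.nonempty_left
              exact ⟨⟨x₀, h1T hx₀⟩, hx₀⟩
            · obtain ⟨u, hu⟩ := hU
              exact ⟨⟨u, hu.2⟩, hu.1⟩
            · rw [Set.disjoint_left]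
              intro x hx1 hx2
              exact (h₁.mem_left_iff x.1).mp hx1 hx2
            · ext x
              simp only [Set.mem_union, Set.mem_preimage, Set.mem_univ, iff_true]
              exact (h₁.union ▸ Set.mem_univ x.1 : x.1 ∈ S₁ ∪ T₁)
          have d' : IsDecomposition ↥T₁ (Subtype.val ⁻¹' S₂) (Subtype.val ⁻¹' T₂) := by
            refine ⟨hB₁, hB₂, ?_, ?_, ?_, ?_⟩
            · obtain ⟨x₀, hx₀⟩ := h₂.nonempty_left
              exact ⟨⟨x₀, h2T hx₀⟩, hx₀⟩
            · obtain ⟨u, hu⟩ := hU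
              exact ⟨⟨u, hu.1⟩, hu.2⟩
            · rw [Set.disjoint_left]
              intro x hx1 hx2
              exact (h₂.mem_left_iff x.1).mp hx1 hx2
            · ext x
              simp only [Set.mem_union, Set.mem_preimage, Set.mem_univ, iff_true]
              exact (h₂.union ▸ Set.mem_univ x.1 : x.1 ∈ S₂ ∪ T₂)
          have hφB₁ : IsSubrack (⇑φ '' (Subtype.val ⁻¹' S₂)) := isSubrack_image φ hφ hB₁
          have hφB₂ : IsSubrack (⇑φ '' (Subtype.val ⁻¹' T₂)) := isSubrack_image φ hφ hB₂
          have d'' : IsDecomposition ↥T₂ (⇑φ '' (Subtype.val ⁻¹' S₂))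
              (⇑φ '' (Subtype.val ⁻¹' T₂)) := by
            refine ⟨hφB₁, hφB₂, d'.nonempty_left.image _, d'.nonempty_right.image _,
              (Set.disjoint_image_iff φ.injective).mpr d'.disjoint, ?_⟩
            rw [← Set.image_union, d'.union, Set.image_univ, Equiv.range_eq_univ]
          have hcard' : Nat.card ↥T₂ ≤ n := by
            have hlt : (T₂ : Set R).ncard < (Set.univ : Set R).ncard := by
              apply Set.ncard_lt_ncard _ Set.finite_univ
              rw [Set.ssubset_univ_iff]
              intro hEq
              obtain ⟨x₀, hx₀⟩ := h₂.nonempty_left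
              exact (h₂.mem_left_iff x₀).mp hx₀ (hEq ▸ Set.mem_univ x₀)
            rw [Nat.card_coe_set_eq]
            have huniv := Set.ncard_univ R
            omega
          have hS₁T₂ : IsSubrack (S₁ ∩ T₂) := isSubrack_of_invariant fun a x =>
            and_congr (h₁.act_mem_left_iff a x) (h₂.act_mem_right_iff a x)
          have hS₂T₁ : IsSubrack (S₂ ∩ T₁) := isSubrack_of_invariant fun a x =>
            and_congr (h₂.act_mem_left_iff a x) (h₁.act_mem_right_iff a x)
          have hTT : IsSubrack (T₁ ∩ T₂) := isSubrack_of_invariant fun a x =>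
            and_congr (h₁.act_mem_right_iff a x) (h₂.act_mem_right_iff a x)
          have hTT' : IsSubrack (T₂ ∩ T₁) := isSubrack_of_invariant fun a x =>
            and_congr (h₂.act_mem_right_iff a x) (h₁.act_mem_right_iff a x)
          have iso1 : SubIso S₁ h₁.subrack_left (Subtype.val ⁻¹' S₁ : Set ↥T₂) hA₁ :=
            (subIso_of_eq (Set.inter_eq_left.mpr h1T).symm _ hS₁T₂).trans
              (subIso_preimage h₂.subrack_right hS₁T₂ hA₁)
          have iso2 : SubIso S₂ h₂.subrack_left (⇑φ '' (Subtype.val ⁻¹' S₂)) hφB₁ :=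
            ((subIso_of_eq (Set.inter_eq_left.mpr h2T).symm _ hS₂T₁).trans
              (subIso_preimage h₁.subrack_right hS₂T₁ hB₁)).trans
              (subIso_image φ hφ hB₁ hφB₁)
          have isoT : SubIso (Subtype.val ⁻¹' T₁ : Set ↥T₂) hA₂
              (⇑φ '' (Subtype.val ⁻¹' T₂)) hφB₂ :=
            ((subIso_preimage h₂.subrack_right hTT hA₂).symm.trans
              ((subIso_of_eq (Set.inter_comm T₁ T₂) hTT hTT').trans
                (subIso_preimage h₁.subrack_right hTT' hB₂))).trans
              (subIso_image φ hφ hB₂ hφB₂)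
          have hcA₁ : SubConn (Subtype.val ⁻¹' S₁ : Set ↥T₂) hA₁ := SubConn.ofIso iso1 hS₁
          have hcφB₁ : SubConn (⇑φ '' (Subtype.val ⁻¹' S₂)) hφB₁ := SubConn.ofIso iso2 hS₂
          have main : SubIso (Subtype.val ⁻¹' S₁ : Set ↥T₂) d.subrack_left
              (⇑φ '' (Subtype.val ⁻¹' S₂)) d''.subrack_left :=
            ih ↥T₂ _ _ _ _ d d'' hcard' isoT hcA₁ hcφB₁
          exact iso1.trans (main.trans iso2.symm)
        · -- T₁ ∩ T₂ = ∅ : then S₁ = T₂ and S₂ = T₁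
          have hT₂S₁ : T₂ ⊆ S₁ := by
            intro x hx
            rcases (h₁.union ▸ Set.mem_univ x : x ∈ S₁ ∪ T₁) with h | h
            · exact h
            · exact absurd ⟨h, hx⟩ (fun hm => hU ⟨x, hm⟩)
          have hT₁S₂ : T₁ ⊆ S₂ := by
            intro x hx
            rcases (h₂.union ▸ Set.mem_univ x : x ∈ S₂ ∪ T₂) with h | h
            · exact h
            · exact absurd ⟨hx, h⟩ (fun hm => hU ⟨x, hm⟩)
          have e1 : S₁ = T₂ := Set.Subset.antisymm h1T hT₂S₁
          have e2 : T₁ = S₂ := Set.Subset.antisymm hT₁S₂ h2T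
          exact (subIso_of_eq e1 _ _).trans (hT.symm.trans (subIso_of_eq e2 _ _))

/-- If a finite rack has two decompositions `R = S₁ ∪ T₁ = S₂ ∪ T₂` into
disjoint nonempty subracks, `T₁ ≅ T₂`, and `S₁`, `S₂` are connected, then `S₁ ≅ S₂`. -/
theorem decomposition_cancellation {R : Type*} [Rack R] [Fintype R]
    {S₁ T₁ S₂ T₂ : Set R}
    (h₁ : IsDecomposition R S₁ T₁) (h₂ : IsDecomposition R S₂ T₂)
    (hT : @RackIsomorphic ↥T₁ ↥T₂ (Subrack.rack T₁ h₁.subrack_right).toShelf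
      (Subrack.rack T₂ h₂.subrack_right).toShelf)
    (hS₁ : @IsConnectedRack ↥S₁ (Subrack.rack S₁ h₁.subrack_left))
    (hS₂ : @IsConnectedRack ↥S₂ (Subrack.rack S₂ h₂.subrack_left)) :
    @RackIsomorphic ↥S₁ ↥S₂ (Subrack.rack S₁ h₁.subrack_left).toShelf
      (Subrack.rack S₂ h₂.subrack_left).toShelf := by
  have : Finite R := inferInstance
  exact aux_cancel (Nat.card R) R S₁ T₁ S₂ T₂ h₁ h₂ le_rfl hT hS₁ hS₂
end

section
/- Let C and C' be finite connected permutation racks (i.e., permutation racks whose permutation is a full cycle on a nonempty finite set), and let Q and Q' be finite connected quandles. If the product racks C × Q and C' × Q' are isomorphic, then C ≅ C' and Q ≅ Q'. -/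
open Quandles

section aux
variable {C : Type*}

lemma perm_fix_aux (π : Equiv.Perm C) (htr : ∀ x y : C, ∃ k : ℤ, (π ^ k) x = y)
    {m : ℤ} {x : C} (hx : (π ^ m) x = x) : π ^ m = 1 := by
  ext y
  obtain ⟨k, rfl⟩ := htr x y
  have hcomm : π ^ m * π ^ k = π ^ k * π ^ m := by
    rw [← zpow_add, ← zpow_add, add_comm]
  calc (π ^ m) ((π ^ k) x) = (π ^ m * π ^ k) x := rfl
    _ = (π ^ k * π ^ m) x := by rw [hcomm]
    _ = (π ^ k) ((π ^ m) x) := rfl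
    _ = (π ^ k) x := by rw [hx]
    _ = (1 : Equiv.Perm C) ((π ^ k) x) := rfl

lemma perm_F_aux (π : Equiv.Perm C) [Fintype C] (hne : Nonempty C)
    (htr : ∀ x y : C, ∃ k : ℤ, (π ^ k) x = y) :
    ∃ F : ZMod (orderOf π) → C, Function.Bijective F ∧ ∀ k, F (k + 1) = π (F k) := by
  obtain ⟨c0⟩ := hne
  haveI : NeZero (orderOf π) := ⟨(orderOf_pos π).ne'⟩
  set n := orderOf π with hn
  refine ⟨fun k => (π ^ k.val) c0, ⟨?_, ?_⟩, ?_⟩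
  · intro j k hjk
    simp only at hjk
    have hjk' : (π ^ (j.val : ℤ)) c0 = (π ^ (k.val : ℤ)) c0 := by
      rw [zpow_natCast, zpow_natCast]; exact hjk
    have h1 : (π ^ ((j.val : ℤ) - k.val)) ((π ^ (k.val : ℤ)) c0) = (π ^ (k.val : ℤ)) c0 := by
      rw [← Equiv.Perm.mul_apply, ← zpow_add, sub_add_cancel, hjk']
    have h2 := perm_fix_aux π htr h1
    have h3 : ((n : ℤ)) ∣ ((j.val : ℤ) - k.val) := by
      simpa [hn] using orderOf_dvd_iff_zpow_eq_one.mpr h2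
    have h4 : ((j.val : ℤ) : ZMod n) = ((k.val : ℤ) : ZMod n) := by
      rw [ZMod.intCast_eq_intCast_iff]
      exact (Int.modEq_iff_dvd.mpr (by simpa using h3)).symm
    have h5 : ((j.val : ℕ) : ZMod n) = ((k.val : ℕ) : ZMod n) := by exact_mod_cast h4
    simpa [ZMod.natCast_val, ZMod.cast_id] using h5
  · intro y
    obtain ⟨k, hk⟩ := htr c0 y
    refine ⟨(k : ZMod n), ?_⟩
    have hc : ((((k : ZMod n).val : ℤ)) : ZMod n) = ((k : ZMod n)) := by
      push_cast
      simp [ZMod.natCast_val, ZMod.cast_id]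
    have hd : (n : ℤ) ∣ (((k : ZMod n).val : ℤ) - k) := by
      rw [← ZMod.intCast_zmod_eq_zero_iff_dvd]
      push_cast
      rw [sub_eq_zero]
      exact_mod_cast hc
    obtain ⟨t, ht⟩ := hd
    have heq : π ^ (((k : ZMod n).val : ℤ)) = π ^ k := by
      have h6 : ((k : ZMod n).val : ℤ) = k + n * t := by linarith [ht]
      rw [h6, zpow_add, zpow_mul, zpow_natCast]
      simp [hn, pow_orderOf_eq_one]
    simp only
    rw [← zpow_natCast, heq, hk]
  · intro k
    have hmod : (k + 1).val ≡ k.val + 1 [MOD n] := by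
      rw [← ZMod.natCast_eq_natCast_iff]
      push_cast
      simp [ZMod.natCast_val, ZMod.cast_id]
    have hp : π ^ ((k + 1).val) = π ^ (k.val + 1) := pow_eq_pow_iff_modEq.mpr hmod
    simp only
    rw [hp, pow_succ', Equiv.Perm.mul_apply]

lemma perm_F_aux' (π : Equiv.Perm C) [Fintype C] (hne : Nonempty C)
    (htr : ∀ x y : C, ∃ k : ℤ, (π ^ k) x = y) (n : ℕ) (hn : n = orderOf π) :
    ∃ F : ZMod n → C, Function.Bijective F ∧ ∀ k, F (k + 1) = π (F k) := by
  subst hn; exact perm_F_aux π hne htr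

lemma perm_card_aux (π : Equiv.Perm C) [Fintype C] (hne : Nonempty C)
    (htr : ∀ x y : C, ∃ k : ℤ, (π ^ k) x = y) : orderOf π = Fintype.card C := by
  haveI : NeZero (orderOf π) := ⟨(orderOf_pos π).ne'⟩
  obtain ⟨F, hF, -⟩ := perm_F_aux π hne htr
  rw [← ZMod.card (orderOf π)]
  exact Fintype.card_congr (Equiv.ofBijective F hF)

lemma permRack_transitive_aux (π : Equiv.Perm C)
    (h : @IsConnectedRack C (permRack π)) (x y : C) : ∃ k : ℤ, (π ^ k) x = y := by
  obtain ⟨g, hg, hgx⟩ := h.2 x y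
  have hle : @Inn C (permRack π) ≤ Subgroup.zpowers π := by
    apply (Subgroup.closure_le _).mpr
    rintro _ ⟨a, rfl⟩
    have hact : (@Rack.act' C (permRack π) a) = π := Equiv.ext fun b => rfl
    rw [hact]
    exact Subgroup.mem_zpowers π
  obtain ⟨k, hk⟩ := Subgroup.mem_zpowers_iff.mp (hle hg)
  exact ⟨k, by rw [hk]; exact hgx⟩

end aux

/-- If `C`, `C'` are finite connected permutation racks and `Q`, `Q'` are finite
connected quandles with `C × Q ≅ C' × Q'`, then `C ≅ C'` and `Q ≅ Q'`. -/
theorem cycle_times_quandle_cancellation {C C' Q Q' : Type*}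
    [Fintype C] [Fintype C'] [Fintype Q] [Fintype Q']
    (π : Equiv.Perm C) (π' : Equiv.Perm C')
    [Quandle Q] [Quandle Q']
    (hC : @IsConnectedRack C (permRack π)) (hC' : @IsConnectedRack C' (permRack π'))
    (hQ : IsConnectedRack Q) (hQ' : IsConnectedRack Q')
    (h : @RackIsomorphic (C × Q) (C' × Q')
      (@prodRack C Q (permRack π) _).toShelf (@prodRack C' Q' (permRack π') _).toShelf) :
    @RackIsomorphic C C' (permRack π).toShelf (permRack π').toShelf ∧
      RackIsomorphic Q Q' := by
  classical
  obtain ⟨f, hf⟩ := h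
  obtain ⟨c0⟩ := hC.1
  obtain ⟨c0'⟩ := hC'.1
  have htr : ∀ x y : C, ∃ k : ℤ, (π ^ k) x = y := permRack_transitive_aux π hC
  have htr' : ∀ x y : C', ∃ k : ℤ, (π' ^ k) x = y := permRack_transitive_aux π' hC'
  have hact : ∀ (a b : C) (x y : Q),
      (@Shelf.act (C × Q) (@prodRack C Q (permRack π) _).toShelf (a, x) (b, y))
        = (π b, x ◃ y) := fun _ _ _ _ => rfl
  have hact' : ∀ (a b : C') (x y : Q'),
      (@Shelf.act (C' × Q') (@prodRack C' Q' (permRack π') _).toShelf (a, x) (b, y))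
        = (π' b, x ◃ y) := fun _ _ _ _ => rfl
  have key1 : ∀ (a : C) (x : Q), f (π a, x) = (π' ((f (a, x)).1), (f (a, x)).2) := by
    intro a x
    have h0 := hf (a, x) (a, x)
    rw [hact, Quandle.fix] at h0
    rw [h0]
    rcases hp : f (a, x) with ⟨a', x'⟩
    rw [hact', Quandle.fix]
  have keyZ : ∀ (k : ℤ) (a : C) (x : Q),
      f ((π ^ k) a, x) = ((π' ^ k) ((f (a, x)).1), (f (a, x)).2) := by
    intro k
    induction k using Int.induction_on with
    | zero => intro a x; simp
    | succ i ih =>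
      intro a x
      have hs : (π ^ ((i : ℤ) + 1)) a = π ((π ^ (i : ℤ)) a) := by
        rw [add_comm, zpow_one_add]; rfl
      have hs' : (π' ^ ((i : ℤ) + 1)) ((f (a, x)).1) = π' ((π' ^ (i : ℤ)) ((f (a, x)).1)) := by
        rw [add_comm, zpow_one_add]; rfl
      rw [hs, key1, ih a x, hs']
    | pred i ih =>
      intro a x
      have hb : π ((π ^ (-(i : ℤ) - 1)) a) = (π ^ (-(i : ℤ))) a := by
        have : π * π ^ (-(i : ℤ) - 1) = π ^ (-(i : ℤ)) := by
          rw [← zpow_one_add]; ring_nf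
        calc π ((π ^ (-(i : ℤ) - 1)) a) = (π * π ^ (-(i : ℤ) - 1)) a := rfl
          _ = (π ^ (-(i : ℤ))) a := by rw [this]
      have h1 := key1 ((π ^ (-(i : ℤ) - 1)) a) x
      rw [hb, ih a x] at h1
      have hfst : π' ((f ((π ^ (-(i : ℤ) - 1)) a, x)).1) = (π' ^ (-(i : ℤ))) ((f (a, x)).1) :=
        (congrArg Prod.fst h1).symm
      have hsnd : (f ((π ^ (-(i : ℤ) - 1)) a, x)).2 = (f (a, x)).2 :=
        (congrArg Prod.snd h1).symm
      have hfst' : (f ((π ^ (-(i : ℤ) - 1)) a, x)).1 = (π' ^ (-(i : ℤ) - 1)) ((f (a, x)).1) := by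
        have hmul : π'⁻¹ * π' ^ (-(i : ℤ)) = π' ^ (-(i : ℤ) - 1) := by
          rw [← zpow_neg_one, ← zpow_add]; ring_nf
        calc (f ((π ^ (-(i : ℤ) - 1)) a, x)).1
            = π'⁻¹ (π' ((f ((π ^ (-(i : ℤ) - 1)) a, x)).1)) := (π'.symm_apply_apply _).symm
          _ = π'⁻¹ ((π' ^ (-(i : ℤ))) ((f (a, x)).1)) := by rw [hfst]
          _ = (π'⁻¹ * π' ^ (-(i : ℤ))) ((f (a, x)).1) := rfl
          _ = (π' ^ (-(i : ℤ) - 1)) ((f (a, x)).1) := by rw [hmul]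
      exact Prod.ext hfst' hsnd
  have snd_const : ∀ (a b : C) (x : Q), (f (a, x)).2 = (f (b, x)).2 := by
    intro a b x
    obtain ⟨k, hk⟩ := htr a b
    rw [← hk, keyZ]
  have hinj : Function.Injective (fun x : Q => (f (c0, x)).2) := by
    intro x y hxy
    simp only at hxy
    obtain ⟨k, hk⟩ := htr' ((f (c0, x)).1) ((f (c0, y)).1)
    have h1 : f ((π ^ k) c0, x) = f (c0, y) := by
      rw [keyZ, hk, hxy]
    have h2 := f.injective h1
    exact congrArg Prod.snd h2
  have hsurj : Function.Surjective (fun x : Q => (f (c0, x)).2) := by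
    intro y'
    refine ⟨(f.symm (c0', y')).2, ?_⟩
    simp only
    calc (f (c0, (f.symm (c0', y')).2)).2
        = (f ((f.symm (c0', y')).1, (f.symm (c0', y')).2)).2 := snd_const _ _ _
      _ = (f (f.symm (c0', y'))).2 := by rw [Prod.mk.eta]
      _ = y' := by rw [f.apply_symm_apply]
  have hQiso : RackIsomorphic Q Q' := by
    refine ⟨Equiv.ofBijective _ ⟨hinj, hsurj⟩, ?_⟩
    intro x y
    show (f (c0, x ◃ y)).2 = (f (c0, x)).2 ◃ (f (c0, y)).2
    have h1 : (f (π c0, x ◃ y)).2 = (f (c0, x ◃ y)).2 := snd_const _ _ _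
    have h2 := hf (c0, x) (c0, y)
    rw [hact] at h2
    rw [← h1, h2]
    rcases hpx : f (c0, x) with ⟨a', u⟩
    rcases hpy : f (c0, y) with ⟨b', v⟩
    rw [hact']
  have cQ : Fintype.card Q = Fintype.card Q' :=
    Fintype.card_congr (Equiv.ofBijective _ ⟨hinj, hsurj⟩)
  have cCQ : Fintype.card C * Fintype.card Q = Fintype.card C' * Fintype.card Q' := by
    have := Fintype.card_congr f
    simpa [Fintype.card_prod] using this
  have hQpos : 0 < Fintype.card Q' := by
    rw [← cQ]; exact Fintype.card_pos_iff.mpr hQ.1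
  have cC : Fintype.card C = Fintype.card C' := by
    rw [cQ] at cCQ
    exact Nat.eq_of_mul_eq_mul_right hQpos cCQ
  have ho : orderOf π = orderOf π' := by
    rw [perm_card_aux π hC.1 htr, perm_card_aux π' hC'.1 htr', cC]
  obtain ⟨F, hF, hFs⟩ := perm_F_aux' π hC.1 htr (orderOf π) rfl
  obtain ⟨F', hF', hFs'⟩ := perm_F_aux' π' hC'.1 htr' (orderOf π) ho
  refine ⟨⟨(Equiv.ofBijective F hF).symm.trans (Equiv.ofBijective F' hF'), ?_⟩, hQiso⟩
  intro x y
  show F' ((Equiv.ofBijective F hF).symm (π y)) = π' (F' ((Equiv.ofBijective F hF).symm y))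
  obtain ⟨k, rfl⟩ := hF.surjective y
  have h1 : π (F k) = F (k + 1) := (hFs k).symm
  have h2 : ∀ j, (Equiv.ofBijective F hF).symm (F j) = j := fun j =>
    (Equiv.ofBijective F hF).symm_apply_apply j
  rw [h1, h2, h2, hFs']
end

section
/- Let C be a finitely generated connected rack. Then: (i) for every finite rack R, the set Mor(C, R) of rack morphisms C → R is finite; (ii) if a finite rack R is decomposed into two disjoint nonempty subracks S and T, then |Mor(C, R)| = |Mor(C, S)| + |Mor(C, T)|; (iii) for finite racks R and R', |Mor(C, R × R')| = |Mor(C, R)| · |Mor(C, R')|, where R × R' is the product rack with componentwise operation. -/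
open Quandles

/-- A rack is finitely generated if it has a finite subset contained in no proper subrack:
every subset containing it and closed under the operations `◃` and `◃⁻¹` is everything. -/
def RackFG (C : Type*) [Rack C] : Prop :=
  ∃ B : Finset C, ∀ X : Set C, ↑B ⊆ X →
    (∀ a ∈ X, ∀ b ∈ X, a ◃ b ∈ X ∧ a ◃⁻¹ b ∈ X) → X = Set.univ

universe u

section Helpers

/-- A shelf hom between racks preserves the inverse action. -/
private lemma shelfHom_map_invAct {C R : Type*} [Rack C] [Rack R] (f : C →◃ R) (a b : C) :
    f (a ◃⁻¹ b) = f a ◃⁻¹ f b := by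
  have h : f a ◃ f (a ◃⁻¹ b) = f a ◃ (f a ◃⁻¹ f b) := by
    rw [← ShelfHom.map_act, Rack.right_inv, Rack.right_inv]
  exact (Rack.left_cancel _).mp h

private lemma isDecomposition_symm {R : Type*} [Rack R] {S T : Set R}
    (hd : IsDecomposition R S T) : IsDecomposition R T S :=
  ⟨hd.subrack_right, hd.subrack_left, hd.nonempty_right, hd.nonempty_left,
    hd.disjoint.symm, by rw [Set.union_comm]; exact hd.union⟩

private lemma act_mem_of_mem {R : Type*} [Rack R] {S T : Set R}
    (hd : IsDecomposition R S T) (c : R) {x : R} (hx : x ∈ S) : c ◃ x ∈ S := by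
  have hcu : c ∈ S ∪ T := hd.union ▸ Set.mem_univ c
  rcases hcu with hc | hc
  · have h := hd.subrack_left c hc
    rw [← h]; exact ⟨x, hx, rfl⟩
  · have hu : c ◃ x ∈ S ∪ T := hd.union ▸ Set.mem_univ _
    rcases hu with h | h
    · exact h
    · exfalso
      have hT := hd.subrack_right c hc
      obtain ⟨y, hy, hey⟩ : c ◃ x ∈ (fun b => c ◃ b) '' T := by rw [hT]; exact h
      have : y = x := (Rack.left_cancel c).mp hey
      exact Set.disjoint_left.mp hd.disjoint hx (this ▸ hy)

private lemma act_mem_iff {R : Type*} [Rack R] {S T : Set R}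
    (hd : IsDecomposition R S T) (c x : R) : c ◃ x ∈ S ↔ x ∈ S := by
  constructor
  · intro h
    have hu : x ∈ S ∪ T := hd.union ▸ Set.mem_univ _
    rcases hu with hx | hx
    · exact hx
    · exact absurd h (Set.disjoint_right.mp hd.disjoint
        (act_mem_of_mem (isDecomposition_symm hd) c hx))
  · exact act_mem_of_mem hd c

/-- Connectedness forces a morphism to have image entirely within one piece. -/
private lemma component_constant {C : Type u} [Rack C] (hC : IsConnectedRack C)
    {R : Type u} [Rack R] {S T : Set R} (hd : IsDecomposition R S T)
    (f : C →◃ R) (x y : C) : f x ∈ S ↔ f y ∈ S := by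
  obtain ⟨g, hg, hgx⟩ := hC.2 y x
  let K : Subgroup (Equiv.Perm C) :=
    { carrier := {g : Equiv.Perm C | ∀ z : C, f (g z) ∈ S ↔ f z ∈ S}
      one_mem' := fun z => Iff.rfl
      mul_mem' := fun {a b} ha hb z => (ha (b z)).trans (hb z)
      inv_mem' := fun {a} ha z => by
        have := ha (a⁻¹ z)
        simpa using this.symm }
  have hK : Inn C ≤ K := by
    apply Subgroup.closure_le K |>.mpr
    rintro _ ⟨a, rfl⟩ z
    have : f (Rack.act' a z) = f a ◃ f z := by
      rw [Rack.act'_apply, ShelfHom.map_act]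
    rw [this]
    exact act_mem_iff hd (f a) (f z)
  have := hK hg y
  rw [hgx] at this
  exact this

end Helpers

/-- For a finitely generated connected rack `C`: (i) `Mor(C, R)` is finite for
every finite rack `R`; (ii) `|Mor(C, R)| = |Mor(C, S)| + |Mor(C, T)|` for any decomposition of a
finite rack `R` into subracks `S` and `T`; (iii) `|Mor(C, R × R')| = |Mor(C, R)| ⬝ |Mor(C, R')|`. -/
theorem marks_are_additive_invariants {C : Type u} [Rack C]
    (hfg : RackFG C) (hC : IsConnectedRack C) :
    (∀ (R : Type u) [Rack R] [Fintype R], Finite (C →◃ R)) ∧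
    (∀ (R : Type u) [Rack R] [Fintype R] (S T : Set R) (hd : IsDecomposition R S T),
      Nat.card (C →◃ R) =
        Nat.card (@ShelfHom C ↥S _ (Subrack.rack S hd.subrack_left).toShelf) +
        Nat.card (@ShelfHom C ↥T _ (Subrack.rack T hd.subrack_right).toShelf)) ∧
    (∀ (R R' : Type u) [Rack R] [Rack R'] [Fintype R] [Fintype R'],
      Nat.card (C →◃ (R × R')) = Nat.card (C →◃ R) * Nat.card (C →◃ R')) := by
  classical
  obtain ⟨B, hB⟩ := hfg
  obtain ⟨x0⟩ := hC.1
  -- Morphisms are determined by their values on B.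
  have key : ∀ (R : Type u) [Rack R] (f g : C →◃ R), (∀ b ∈ B, f b = g b) → f = g := by
    intro R _ f g hfg'
    have hX : {x : C | f x = g x} = Set.univ := by
      apply hB
      · intro b hb; exact hfg' b hb
      · intro a ha b hb
        constructor
        · show f (a ◃ b) = g (a ◃ b)
          rw [ShelfHom.map_act, ShelfHom.map_act, ha, hb]
        · show f (a ◃⁻¹ b) = g (a ◃⁻¹ b)
          rw [shelfHom_map_invAct, shelfHom_map_invAct, ha, hb]
    exact DFunLike.ext f g fun x => (Set.eq_univ_iff_forall.mp hX x : _)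
  have fin : ∀ (R : Type u) [Rack R] [Finite R], Finite (C →◃ R) := by
    intro R _ _
    have hinj : Function.Injective (fun (f : C →◃ R) (b : B) => f b.1) := by
      intro f g h
      exact key R f g fun b hb => congrFun h ⟨b, hb⟩
    exact Finite.of_injective _ hinj
  refine ⟨fun R _ _ => fin R, ?_, ?_⟩
  · -- additivity for decompositions
    intro R _ _ S T hd
    letI : Rack ↥S := Subrack.rack S hd.subrack_left
    letI : Rack ↥T := Subrack.rack T hd.subrack_right
    have dichot : ∀ (f : C →◃ R), ¬(∀ x, f x ∈ S) → ∀ x, f x ∈ T := by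
      intro f h x
      have hu : f x ∈ S ∪ T := hd.union ▸ Set.mem_univ _
      rcases hu with hx | hx
      · exfalso; apply h; intro y
        exact (component_constant hC hd f y x).mpr hx
      · exact hx
    let e : (C →◃ R) ≃ (C →◃ ↥S) ⊕ (C →◃ ↥T) :=
      { toFun := fun f =>
          if h : ∀ x, f x ∈ S then
            Sum.inl ⟨fun x => ⟨f x, h x⟩, fun {x y} => Subtype.ext (ShelfHom.map_act f)⟩
          else
            Sum.inr ⟨fun x => ⟨f x, dichot f h x⟩, fun {x y} => Subtype.ext (ShelfHom.map_act f)⟩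
        invFun := Sum.elim
          (fun g => ⟨fun x => (g x).1, fun {x y} => congrArg Subtype.val (ShelfHom.map_act g)⟩)
          (fun g => ⟨fun x => (g x).1, fun {x y} => congrArg Subtype.val (ShelfHom.map_act g)⟩)
        left_inv := fun f => by
          dsimp only
          by_cases h : ∀ x, f x ∈ S
          · rw [dif_pos h]; exact DFunLike.ext _ _ fun x => rfl
          · rw [dif_neg h]; exact DFunLike.ext _ _ fun x => rfl
        right_inv := by
          rintro (g | g) <;> dsimp only [Sum.elim_inl, Sum.elim_inr]
          · split_ifs with h
            · exact congrArg Sum.inl (DFunLike.ext _ _ fun x => Subtype.ext rfl)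
            · exact absurd (fun x => (g x).2) h
          · split_ifs with h
            · exact (Set.disjoint_left.mp hd.disjoint (h x0) (g x0).2).elim
            · exact congrArg Sum.inr (DFunLike.ext _ _ fun x => Subtype.ext rfl) }
    haveI : Finite (C →◃ ↥S) := fin ↥S
    haveI : Finite (C →◃ ↥T) := fin ↥T
    rw [Nat.card_congr e, Nat.card_sum]
  · -- multiplicativity for products
    intro R R' _ _ _ _
    let e : (C →◃ (R × R')) ≃ (C →◃ R) × (C →◃ R') :=
      { toFun := fun f =>
          (⟨fun x => (f x).1, fun {x y} => congrArg Prod.fst (ShelfHom.map_act f)⟩,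
           ⟨fun x => (f x).2, fun {x y} => congrArg Prod.snd (ShelfHom.map_act f)⟩)
        invFun := fun g =>
          ⟨fun x => (g.1 x, g.2 x), fun {x y} =>
            Prod.ext (ShelfHom.map_act g.1) (ShelfHom.map_act g.2)⟩
        left_inv := fun f => DFunLike.ext _ _ fun x => rfl
        right_inv := fun g => Prod.ext (DFunLike.ext _ _ fun x => rfl)
          (DFunLike.ext _ _ fun x => rfl) }
    rw [Nat.card_congr e, Nat.card_prod]
end

section
/- Let D₁, …, Dₙ be pairwise non-isomorphic finite connected racks and λ₁, …, λₙ integers. If for every finite connected rack C the equality λ₁·|Mor(C, D₁)| + ⋯ + λₙ·|Mor(C, Dₙ)| = 0 holds, where Mor(C, D) denotes the (finite) set of rack morphisms C → D, then λ₁ = ⋯ = λₙ = 0. In other words, the mark functions C ↦ |Mor(C, −)| separate integral linear combinations of isomorphism classes of finite connected racks. -/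
open Quandles

open Function

namespace MarksSep

/-- Homs are finite when the types are. -/
instance finiteShelfHom (C E : Type*) [Shelf C] [Shelf E] [Finite C] [Finite E] :
    Finite (ShelfHom C E) :=
  Finite.of_injective (fun f => (f : C → E)) DFunLike.coe_injective

instance finiteSurjHom (C E : Type*) [Shelf C] [Shelf E] [Finite C] [Finite E] :
    Finite {f : ShelfHom C E // Surjective f} :=
  Subtype.finite

/-- The number of surjective shelf homs. -/
noncomputable def surjCount (C E : Type*) [Shelf C] [Shelf E] : ℕ :=
  Nat.card {f : ShelfHom C E // Surjective f}

lemma surjCount_self_pos (C : Type*) [Shelf C] [Finite C] : 0 < surjCount C C :=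
  haveI : Nonempty {f : ShelfHom C C // Surjective f} := ⟨⟨ShelfHom.id C, surjective_id⟩⟩
  Nat.card_pos

lemma exists_surj_of_surjCount_ne_zero {C E : Type*} [Shelf C] [Shelf E]
    (h : surjCount C E ≠ 0) : ∃ f : ShelfHom C E, Surjective f := by
  have : Nonempty {f : ShelfHom C E // Surjective f} := Nat.card_ne_zero.mp h |>.1
  obtain ⟨f, hf⟩ := this
  exact ⟨f, hf⟩

/-- `RackIsomorphic` is reflexive. -/
lemma RackIsomorphic.refl (A : Type*) [Shelf A] : RackIsomorphic A A :=
  ⟨Equiv.refl A, fun _ _ => rfl⟩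

lemma RackIsomorphic.symm {A B : Type*} [Shelf A] [Shelf B]
    (h : RackIsomorphic A B) : RackIsomorphic B A := by
  obtain ⟨e, he⟩ := h
  refine ⟨e.symm, fun x y => e.injective ?_⟩
  rw [he, e.apply_symm_apply, e.apply_symm_apply, e.apply_symm_apply]

lemma RackIsomorphic.trans {A B C : Type*} [Shelf A] [Shelf B] [Shelf C]
    (h : RackIsomorphic A B) (h' : RackIsomorphic B C) : RackIsomorphic A C := by
  obtain ⟨e, he⟩ := h
  obtain ⟨e', he'⟩ := h'
  exact ⟨e.trans e', fun x y => by simp [he, he']⟩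

/-- Iso invariance of `surjCount` in the target. -/
lemma surjCount_congr_right {A B : Type*} [Shelf A] [Shelf B] (C : Type*) [Shelf C]
    (h : RackIsomorphic A B) : surjCount C A = surjCount C B := by
  obtain ⟨e, he⟩ := h
  refine Nat.card_congr ?_
  refine ⟨fun f => ⟨⟨fun x => e (f.1 x), by intro x y; show e (f.1 (x ◃ y)) = _; rw [f.1.map_act, he]⟩,
      e.surjective.comp f.2⟩,
    fun g => ⟨⟨fun x => e.symm (g.1 x), by
      intro x y
      show e.symm (g.1 (x ◃ y)) = _
      apply e.injective
      rw [e.apply_symm_apply, g.1.map_act, he, e.apply_symm_apply, e.apply_symm_apply]⟩,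
      e.symm.surjective.comp g.2⟩, ?_, ?_⟩
  · intro f; ext x; exact e.symm_apply_apply _
  · intro g; ext x; exact e.apply_symm_apply _


/-- Push inner automorphisms forward along a rack hom. -/
lemma exists_inn_map {C E : Type*} [Rack C] [Rack E] (f : ShelfHom C E) :
    ∀ g ∈ Inn C, ∃ h ∈ Inn E, ∀ x, h (f x) = f (g x) := by
  intro g hg
  induction hg using Subgroup.closure_induction with
  | mem x hx =>
    obtain ⟨a, rfl⟩ := hx
    exact ⟨Rack.act' (f a), Subgroup.subset_closure ⟨f a, rfl⟩, fun x => by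
      simp [Rack.act'_apply]⟩
  | one => exact ⟨1, one_mem _, fun x => rfl⟩
  | mul x y hx hy ihx ihy =>
    obtain ⟨hx', hxm, hxe⟩ := ihx
    obtain ⟨hy', hym, hye⟩ := ihy
    exact ⟨hx' * hy', mul_mem hxm hym, fun z => by
      simp only [Equiv.Perm.mul_apply, hye, hxe]⟩
  | inv x hx ih =>
    obtain ⟨h', hm, he⟩ := ih
    refine ⟨h'⁻¹, inv_mem hm, fun z => ?_⟩
    have h2 : h' (f (x⁻¹ z)) = f z := by rw [he, ← Equiv.Perm.mul_apply, mul_inv_cancel, Equiv.Perm.one_apply]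
    calc h'⁻¹ (f z) = h'⁻¹ (h' (f (x⁻¹ z))) := by rw [h2]
      _ = f (x⁻¹ z) := by rw [← Equiv.Perm.mul_apply, inv_mul_cancel, Equiv.Perm.one_apply]

/-- The surjective image of a connected rack is connected. -/
lemma isConnected_of_surjHom {C E : Type*} [Rack C] [Rack E] (f : ShelfHom C E)
    (hf : Surjective f) (hC : IsConnectedRack C) : IsConnectedRack E := by
  obtain ⟨hne, htrans⟩ := hC
  refine ⟨hne.map f, fun x y => ?_⟩
  obtain ⟨a, rfl⟩ := hf x
  obtain ⟨b, rfl⟩ := hf y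
  obtain ⟨g, hg, hab⟩ := htrans a b
  obtain ⟨h, hm, he⟩ := exists_inn_map f g hg
  exact ⟨h, hm, by rw [he, hab]⟩

/-- The range of a rack hom is a subrack. -/
lemma isSubrack_range {C E : Type*} [Rack C] [Rack E] (f : ShelfHom C E) :
    IsSubrack (Set.range f) := by
  rintro s ⟨c, rfl⟩
  ext y
  constructor
  · rintro ⟨-, ⟨a, rfl⟩, rfl⟩
    exact ⟨c ◃ a, f.map_act⟩
  · rintro ⟨w, rfl⟩
    exact ⟨f (c ◃⁻¹ w), ⟨c ◃⁻¹ w, rfl⟩, by show f c ◃ f (c ◃⁻¹ w) = f w; rw [← f.map_act, Rack.right_inv]⟩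

/-- The count of surjective homs onto a subrack. -/
noncomputable def subSurjCount (C : Type*) [Shelf C] {E : Type*} [Rack E]
    (S : {S : Set E // IsSubrack S}) : ℕ :=
  @surjCount C ↥S.1 _ (Subrack.rack S.1 S.2).toShelf

/-- Partition of homs according to their range. -/
lemma card_shelfHom_eq_sum (C E : Type*) [Rack C] [Rack E] [Finite C] [Finite E]
    [Fintype {S : Set E // IsSubrack S}] :
    Nat.card (ShelfHom C E) = ∑ S : {S : Set E // IsSubrack S}, subSurjCount C S := by
  classical
  letI instS : ∀ S : {S : Set E // IsSubrack S}, Shelf ↥S.1 :=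
    fun S => (Subrack.rack S.1 S.2).toShelf
  let F : {S : Set E // IsSubrack S} → Type _ :=
    fun S => {g : @ShelfHom C ↥S.1 _ (instS S) // Surjective g.toFun}
  let Φ : (Σ S, F S) → ShelfHom C E := fun p =>
    ⟨fun x => ((p.2.1).toFun x).1, by
      intro x y; exact congrArg Subtype.val (p.2.1.map_act')⟩
  have hbij : Bijective Φ := by
    constructor
    · rintro ⟨⟨S, hS⟩, g, hg⟩ ⟨⟨T, hT⟩, k, hk⟩ h
      have hv : ∀ x, ((g.toFun x : ↥S) : E) = ((k.toFun x : ↥T) : E) := by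
        intro x
        exact congrFun (congrArg ShelfHom.toFun h) x
      have hST : S = T := by
        ext y
        constructor
        · intro hy
          obtain ⟨x, hx⟩ := hg ⟨y, hy⟩
          have : y = ((k.toFun x : ↥T) : E) := by rw [← hv x, hx]
          rw [this]; exact (k.toFun x).2
        · intro hy
          obtain ⟨x, hx⟩ := hk ⟨y, hy⟩
          have : y = ((g.toFun x : ↥S) : E) := by rw [hv x, hx]
          rw [this]; exact (g.toFun x).2
      subst hST
      have hgk : g = k := by
        apply DFunLike.ext
        intro x
        exact Subtype.ext (hv x)
      subst hgk
      rfl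
    · intro f
      refine ⟨⟨⟨Set.range f, isSubrack_range f⟩,
        ⟨⟨fun x => ⟨f x, ⟨x, rfl⟩⟩, ?_⟩, ?_⟩⟩, ?_⟩
      · intro x y
        exact Subtype.ext f.map_act
      · rintro ⟨y, x, rfl⟩
        exact ⟨x, rfl⟩
      · apply DFunLike.ext
        intro x
        rfl
  haveI : ∀ S : {S : Set E // IsSubrack S}, Fintype (F S) := fun S => Fintype.ofFinite _
  calc Nat.card (ShelfHom C E) = Nat.card (Σ S, F S) :=
        (Nat.card_congr (Equiv.ofBijective Φ hbij)).symm
    _ = Fintype.card (Σ S, F S) := Nat.card_eq_fintype_card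
    _ = ∑ S : {S : Set E // IsSubrack S}, Fintype.card (F S) := Fintype.card_sigma
    _ = ∑ S : {S : Set E // IsSubrack S}, subSurjCount C S :=
        Finset.sum_congr rfl fun S _ => Nat.card_eq_fintype_card.symm


/-- A surjective hom between finite racks of equal cardinality is an isomorphism. -/
lemma rackIsomorphic_of_surj_card {C E : Type*} [Shelf C] [Shelf E] [Finite C] [Finite E]
    (f : ShelfHom C E) (hf : Surjective f) (hcard : Nat.card C = Nat.card E) :
    RackIsomorphic C E := by
  haveI := Fintype.ofFinite C
  haveI := Fintype.ofFinite E
  have hb : Bijective f := (Fintype.bijective_iff_surjective_and_card f).mpr ⟨hf, by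
    rw [← Nat.card_eq_fintype_card, ← Nat.card_eq_fintype_card]; exact hcard⟩
  exact ⟨Equiv.ofBijective f hb, fun x y => f.map_act⟩

lemma isSubrack_univ {E : Type*} [Rack E] : IsSubrack (Set.univ : Set E) := by
  intro s _
  rw [Set.image_univ]
  exact Set.range_eq_univ.mpr fun y => ⟨s ◃⁻¹ y, Rack.right_inv s y⟩

/-- Every rack is isomorphic to its `univ` subrack. -/
lemma rackIso_univ (E : Type*) [Rack E] {h : IsSubrack (Set.univ : Set E)} :
    @RackIsomorphic E ↥(Set.univ : Set E) _ (Subrack.rack _ h).toShelf :=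
  ⟨(Equiv.Set.univ E).symm, fun x y => Subtype.ext rfl⟩

end MarksSep

open MarksSep Function

universe u

/-- The marks separate integral linear combinations of isomorphism classes of
finite connected racks: if `D₁, …, Dₙ` are pairwise non-isomorphic finite connected racks and
`∑ λᵢ |Mor(E, Dᵢ)| = 0` for every finite connected rack `E`, then all `λᵢ` vanish. -/
theorem marks_separate {n : ℕ} (D : Fin n → Type u) (instD : ∀ i, Rack (D i))
    (instF : ∀ i, Fintype (D i))
    (hconn : ∀ i, @IsConnectedRack (D i) (instD i))
    (hnoniso : ∀ i j, i ≠ j →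
      ¬ @RackIsomorphic (D i) (D j) (instD i).toShelf (instD j).toShelf)
    (lam : Fin n → ℤ)
    (h : ∀ (E : Type u) [Rack E] [Fintype E], IsConnectedRack E →
      (∑ i, lam i * (Nat.card (@ShelfHom E (D i) _ (instD i).toShelf) : ℤ)) = 0) :
    ∀ i, lam i = 0 := by
  classical
  letI : ∀ i, Rack (D i) := instD
  letI : ∀ i, Fintype (D i) := instF
  let P : Fin n → Type u := fun i => {S : Set (D i) // IsSubrack S}
  haveI hPf : ∀ i, Fintype (P i) := fun i => Fintype.ofFinite _
  let Q : Type u := Σ i : Fin n, P i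
  let qR : ∀ q : Q, Rack ↥q.2.1 := fun q => Subrack.rack q.2.1 q.2.2
  haveI qFin : ∀ q : Q, Finite ↥q.2.1 := fun q => Subtype.finite
  let sc : Q → Q → ℕ := fun q q' =>
    @surjCount ↥q.2.1 ↥q'.2.1 (qR q).toShelf (qR q').toShelf
  let iso : Q → Q → Prop := fun q q' =>
    @RackIsomorphic ↥q.2.1 ↥q'.2.1 (qR q).toShelf (qR q').toShelf
  let conn : Q → Prop := fun q => @IsConnectedRack ↥q.2.1 (qR q)
  have isoEquiv : Equivalence iso :=
    ⟨fun q => @RackIsomorphic.refl _ (qR q).toShelf,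
     fun {q q'} h => @RackIsomorphic.symm _ _ (qR q).toShelf (qR q').toShelf h,
     fun {q q' q''} h h' =>
       @RackIsomorphic.trans _ _ _ (qR q).toShelf (qR q').toShelf (qR q'').toShelf h h'⟩
  let sQ : Setoid Q := ⟨iso, isoEquiv⟩
  haveI : Fintype (Quotient sQ) := Fintype.ofFinite _
  let nu : Quotient sQ → ℤ := fun c =>
    ∑ q' ∈ Finset.univ.filter (fun q' => Quotient.mk sQ q' = c), lam q'.1
  -- the main counting identity, for connected subracks as test racks
  have key : ∀ q : Q, conn q → (∑ q' : Q, lam q'.1 * (sc q q' : ℤ)) = 0 := by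
    intro q hq
    have h0 := @h ↥q.2.1 (qR q) (Fintype.ofFinite _) hq
    rw [← h0, show (Finset.univ : Finset Q) = Finset.univ.sigma (fun _ => Finset.univ) from
      Finset.univ_sigma_univ.symm, Finset.sum_sigma]
    refine Finset.sum_congr rfl fun i _ => ?_
    show (∑ S : P i, lam i * (sc q ⟨i, S⟩ : ℤ)) = _
    rw [← Finset.mul_sum]
    congr 1
    rw [@card_shelfHom_eq_sum ↥q.2.1 (D i) (qR q) (instD i) (qFin q) inferInstance (hPf i)]
    push_cast
    rfl
  -- regrouped by isomorphism classes
  have key2 : ∀ q : Q, conn q →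
      (∑ c : Quotient sQ, (sc q (Quotient.out c) : ℤ) * nu c) = 0 := by
    intro q hq
    have h1 := key q hq
    rw [← Finset.sum_fiberwise Finset.univ (fun q' => Quotient.mk sQ q')
      (fun q' => lam q'.1 * (sc q q' : ℤ))] at h1
    rw [← h1]
    refine Finset.sum_congr rfl fun c _ => ?_
    have hcg : ∀ q' ∈ Finset.univ.filter (fun q' => Quotient.mk sQ q' = c),
        lam q'.1 * (sc q q' : ℤ) = lam q'.1 * (sc q (Quotient.out c) : ℤ) := by
      intro q' hq'
      have hmem := (Finset.mem_filter.mp hq').2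
      have hrel : iso q' (Quotient.out c) := by
        refine Quotient.exact (s := sQ) ?_
        rw [hmem, Quotient.out_eq]
      have hsc : sc q q' = sc q (Quotient.out c) :=
        @surjCount_congr_right ↥q'.2.1 ↥(Quotient.out c).2.1 (qR q').toShelf
          (qR (Quotient.out c)).toShelf ↥q.2.1 (qR q).toShelf hrel
      rw [hsc]
    rw [Finset.sum_congr rfl hcg, ← Finset.sum_mul, mul_comm]
  -- descent: the class sums vanish on connected subracks
  have claimA : ∀ m : ℕ, ∀ q : Q, conn q → Nat.card ↥q.2.1 ≤ m →
      nu (Quotient.mk sQ q) = 0 := by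
    intro m
    induction m with
    | zero =>
      intro q hq hle
      exfalso
      have hne : Nat.card ↥q.2.1 ≠ 0 :=
        Nat.card_ne_zero.mpr ⟨hq.1, qFin q⟩
      omega
    | succ m ih =>
      intro q hq hle
      have h2 := key2 q hq
      have hz : ∀ c : Quotient sQ, c ≠ Quotient.mk sQ q →
          (sc q (Quotient.out c) : ℤ) * nu c = 0 := by
        intro c hc
        by_cases hsc : sc q (Quotient.out c) = 0
        · rw [hsc]; simp
        · obtain ⟨f, hf⟩ := @exists_surj_of_surjCount_ne_zero ↥q.2.1 ↥(Quotient.out c).2.1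
            (qR q).toShelf (qR (Quotient.out c)).toShelf hsc
          have hco : conn (Quotient.out c) :=
            @isConnected_of_surjHom _ _ (qR q) (qR (Quotient.out c)) f hf hq
          have hcle : Nat.card ↥(Quotient.out c).2.1 ≤ Nat.card ↥q.2.1 :=
            @Nat.card_le_card_of_surjective _ _ (qFin q) f hf
          rcases eq_or_lt_of_le hcle with heq | hlt
          · exfalso
            have hiso : iso q (Quotient.out c) :=
              @rackIsomorphic_of_surj_card _ _ (qR q).toShelf (qR (Quotient.out c)).toShelf
                (qFin q) (qFin (Quotient.out c)) f hf heq.symm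
            refine hc ?_
            rw [← Quotient.out_eq c]
            exact (Quotient.sound (s := sQ) hiso).symm
          · have hnu0 : nu (Quotient.mk sQ (Quotient.out c)) = 0 :=
              ih (Quotient.out c) hco (by omega)
            rw [Quotient.out_eq] at hnu0
            rw [hnu0, mul_zero]
      rw [Fintype.sum_eq_single (Quotient.mk sQ q) hz] at h2
      have hiso : iso (Quotient.out (Quotient.mk sQ q)) q :=
        Quotient.exact (s := sQ) (Quotient.out_eq _)
      have hscq : sc q (Quotient.out (Quotient.mk sQ q)) = sc q q :=
        @surjCount_congr_right _ _ (qR (Quotient.out (Quotient.mk sQ q))).toShelf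
          (qR q).toShelf ↥q.2.1 (qR q).toShelf hiso
      rw [hscq] at h2
      have hpos : 0 < sc q q := @surjCount_self_pos ↥q.2.1 (qR q).toShelf (qFin q)
      rcases mul_eq_zero.mp h2 with h3 | h3
      · exfalso
        have : sc q q = 0 := by exact_mod_cast h3
        omega
      · exact h3
  -- conclusion
  by_contra hcon
  push_neg at hcon
  obtain ⟨i0, hi0⟩ := hcon
  set F : Finset (Fin n) := Finset.univ.filter (fun j => lam j ≠ 0) with hF
  have hFne : F.Nonempty := ⟨i0, by simp [hF, hi0]⟩
  obtain ⟨i, hiF, hmax⟩ := F.exists_max_image (fun j => Nat.card (D j)) hFne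
  have hlami : lam i ≠ 0 := (Finset.mem_filter.mp hiF).2
  let q0 : Q := ⟨i, ⟨Set.univ, isSubrack_univ⟩⟩
  -- q0 is connected
  have hsurj0 : ∃ f : @ShelfHom (D i) ↥(q0.2.1) _ (qR q0).toShelf, Surjective f := by
    refine ⟨⟨fun x => ⟨x, trivial⟩, fun {x y} => Subtype.ext rfl⟩, ?_⟩
    rintro ⟨y, -⟩
    exact ⟨y, rfl⟩
  obtain ⟨f0, hf0⟩ := hsurj0
  have hq0conn : conn q0 :=
    @isConnected_of_surjHom _ _ (instD i) (qR q0) f0 hf0 (hconn i)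
  have hnu := claimA (Nat.card ↥q0.2.1) q0 hq0conn le_rfl
  -- expand nu
  have hmem0 : q0 ∈ Finset.univ.filter (fun q' => Quotient.mk sQ q' = Quotient.mk sQ q0) :=
    Finset.mem_filter.mpr ⟨Finset.mem_univ _, rfl⟩
  have hz : ∀ q' ∈ Finset.univ.filter (fun q' => Quotient.mk sQ q' = Quotient.mk sQ q0),
      q' ≠ q0 → lam q'.1 = 0 := by
    rintro ⟨j, T, hT⟩ hq' hne
    have hrel : iso (⟨j, T, hT⟩ : Q) q0 :=
      Quotient.exact (s := sQ) (Finset.mem_filter.mp hq').2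
    -- cardinalities
    have hcardT : Nat.card ↥T = Nat.card (D i) := by
      obtain ⟨e, -⟩ := hrel
      rw [Nat.card_congr e]
      exact Nat.card_congr (Equiv.Set.univ (D i))
    have hTsub : Nat.card ↥T ≤ Nat.card (D j) := by
      rw [Nat.card_coe_set_eq, ← Set.ncard_univ]
      exact Set.ncard_le_ncard (Set.subset_univ T) Set.finite_univ
    rcases eq_or_lt_of_le hTsub with heq | hlt
    · -- T = univ, so D j ≅ D i, forcing j = i and q' = q0
      exfalso
      have hTuniv : T = Set.univ := by
        apply Set.eq_of_subset_of_ncard_le (Set.subset_univ T) _ Set.finite_univ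
        rw [Set.ncard_univ, ← Nat.card_coe_set_eq, heq]
      subst hTuniv
      rcases eq_or_ne j i with rfl | hji
      · exact hne rfl
      · refine hnoniso j i hji ?_
        -- D j ≅ univ_j ≅ univ_i ≅ D i
        exact @RackIsomorphic.trans (D j) ↥(Set.univ : Set (D j)) (D i)
          (instD j).toShelf (Subrack.rack _ hT).toShelf (instD i).toShelf
          (@rackIso_univ (D j) (instD j) hT)
          (@RackIsomorphic.trans ↥(Set.univ : Set (D j)) ↥(Set.univ : Set (D i)) (D i)
            (Subrack.rack _ hT).toShelf (Subrack.rack _ q0.2.2).toShelf (instD i).toShelf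
            hrel
            (@RackIsomorphic.symm (D i) ↥(Set.univ : Set (D i))
              (instD i).toShelf (Subrack.rack _ q0.2.2).toShelf
              (@rackIso_univ (D i) (instD i) q0.2.2)))
    · -- |D j| > |D i|, so lam j = 0 by maximality
      by_contra hlam
      have hjF : j ∈ F := by simp [hF, hlam]
      have := hmax j hjF
      omega
  rw [show nu (Quotient.mk sQ q0) =
      ∑ q' ∈ Finset.univ.filter (fun q' => Quotient.mk sQ q' = Quotient.mk sQ q0), lam q'.1
    from rfl, Finset.sum_eq_single_of_mem q0 hmem0 hz] at hnu
  exact hlami hnu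
end

section
/- Let C and R be finite racks and let D be a finite rack. Write Mor^D(C, R) for the set of rack morphisms C → R whose image (a subrack of R) is isomorphic to D, Inj(D, R) for the set of injective rack morphisms D → R, Sur(C, D) for the set of surjective rack morphisms C → D, and Aut(D) for the group of rack automorphisms of D. Then |Mor^D(C, R)| · |Aut(D)| = |Inj(D, R)| · |Sur(C, D)|. -/
open Quandles

/-- The image of a rack morphism, with its induced shelf structure. -/
def rangeShelf {C R : Type*} [Rack C] [Rack R] (f : C →◃ R) : Shelf (Set.range ⇑f) where
  act x y := ⟨x.1 ◃ y.1, by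
    obtain ⟨a, ha⟩ := x.2
    obtain ⟨b, hb⟩ := y.2
    exact ⟨a ◃ b, by rw [f.map_act, ha, hb]⟩⟩
  self_distrib := by
    intro x y z
    exact Subtype.ext Shelf.self_distrib

universe u

theorem symm_act' {A B : Type*} [Shelf A] [Shelf B] (e : A ≃ B)
    (he : ∀ x y : A, e (x ◃ y) = e x ◃ e y) (x y : B) :
    e.symm (x ◃ y) = e.symm x ◃ e.symm y :=
  e.injective (by rw [he, Equiv.apply_symm_apply, Equiv.apply_symm_apply, Equiv.apply_symm_apply])

variable {C R D : Type u} [Rack C] [Rack R] [Rack D]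

-- forward map pieces
noncomputable def injOf (f : C →◃ R)
    (hf : @RackIsomorphic (Set.range ⇑f) D (rangeShelf f) Rack.toShelf)
    (g : Equiv.Perm D) (hg : ∀ x y : D, g (x ◃ y) = g x ◃ g y) : D →◃ R where
  toFun d := ((hf.choose.symm (g.symm d) : Set.range ⇑f) : R)
  map_act' := by
    intro x y
    have h1 := symm_act' g hg x y
    have h2 := @symm_act' _ _ (rangeShelf f) _ hf.choose hf.choose_spec (g.symm x) (g.symm y)
    rw [h1, h2]
    rfl

noncomputable def surOf (f : C →◃ R)
    (hf : @RackIsomorphic (Set.range ⇑f) D (rangeShelf f) Rack.toShelf)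
    (g : Equiv.Perm D) (hg : ∀ x y : D, g (x ◃ y) = g x ◃ g y) : C →◃ D where
  toFun c := g (hf.choose ⟨f c, Set.mem_range_self c⟩)
  map_act' := by
    intro x y
    have h0 : (⟨f (x ◃ y), Set.mem_range_self _⟩ : Set.range ⇑f)
        = @Shelf.act _ (rangeShelf f) ⟨f x, Set.mem_range_self x⟩ ⟨f y, Set.mem_range_self y⟩ :=
      Subtype.ext f.map_act
    rw [h0, hf.choose_spec, hg]

theorem injOf_injective (f : C →◃ R)
    (hf : @RackIsomorphic (Set.range ⇑f) D (rangeShelf f) Rack.toShelf)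
    (g : Equiv.Perm D) (hg : ∀ x y : D, g (x ◃ y) = g x ◃ g y) :
    Function.Injective ⇑(injOf f hf g hg) :=
  fun a b h => g.symm.injective (hf.choose.symm.injective (Subtype.ext h))

theorem surOf_surjective (f : C →◃ R)
    (hf : @RackIsomorphic (Set.range ⇑f) D (rangeShelf f) Rack.toShelf)
    (g : Equiv.Perm D) (hg : ∀ x y : D, g (x ◃ y) = g x ◃ g y) :
    Function.Surjective ⇑(surOf f hf g hg) := by
  intro d
  obtain ⟨c, hc⟩ := (hf.choose.symm (g.symm d)).2
  refine ⟨c, ?_⟩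
  show g (hf.choose ⟨f c, Set.mem_range_self c⟩) = d
  have h : (⟨f c, Set.mem_range_self c⟩ : Set.range ⇑f) = hf.choose.symm (g.symm d) :=
    Subtype.ext hc
  rw [h, Equiv.apply_symm_apply, Equiv.apply_symm_apply]

noncomputable def ibarE (i : D →◃ R) (hi : Function.Injective ⇑i) (s : C →◃ D)
    (hs : Function.Surjective ⇑s) : D ≃ Set.range ⇑(i.comp s) :=
  Equiv.ofBijective (fun d => ⟨i d, by
      obtain ⟨c, hc⟩ := hs d
      exact ⟨c, by simp [hc]⟩⟩)
    ⟨fun a b hab => hi (congrArg Subtype.val hab),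
     fun x => by obtain ⟨c, hc⟩ := x.2; exact ⟨s c, Subtype.ext hc⟩⟩

theorem ibarE_act (i : D →◃ R) (hi : Function.Injective ⇑i) (s : C →◃ D)
    (hs : Function.Surjective ⇑s) (x y : D) :
    ibarE i hi s hs (x ◃ y)
      = @Shelf.act _ (rangeShelf (i.comp s)) (ibarE i hi s hs x) (ibarE i hi s hs y) :=
  Subtype.ext i.map_act

theorem rackIso_comp (i : D →◃ R) (hi : Function.Injective ⇑i) (s : C →◃ D)
    (hs : Function.Surjective ⇑s) :
    @RackIsomorphic (Set.range ⇑(i.comp s)) D (rangeShelf (i.comp s)) Rack.toShelf :=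
  ⟨(ibarE i hi s hs).symm,
    @symm_act' D _ _ (rangeShelf (i.comp s)) (ibarE i hi s hs) (ibarE_act i hi s hs)⟩

theorem gOf_aux (i : D →◃ R) (hi : Function.Injective ⇑i) (s : C →◃ D)
    (hs : Function.Surjective ⇑s) (x y : D) :
    ((ibarE i hi s hs).trans (rackIso_comp i hi s hs).choose) (x ◃ y)
      = ((ibarE i hi s hs).trans (rackIso_comp i hi s hs).choose) x
          ◃ ((ibarE i hi s hs).trans (rackIso_comp i hi s hs).choose) y := by
  rw [Equiv.trans_apply, Equiv.trans_apply, Equiv.trans_apply, ibarE_act,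
    (rackIso_comp i hi s hs).choose_spec]

theorem gOf_act (i : D →◃ R) (hi : Function.Injective ⇑i) (s : C →◃ D)
    (hs : Function.Surjective ⇑s) (x y : D) :
    ((ibarE i hi s hs).trans (rackIso_comp i hi s hs).choose).symm (x ◃ y)
      = ((ibarE i hi s hs).trans (rackIso_comp i hi s hs).choose).symm x
          ◃ ((ibarE i hi s hs).trans (rackIso_comp i hi s hs).choose).symm y :=
  symm_act' _ (gOf_aux i hi s hs) x y

noncomputable def auxF
    (p : {f : C →◃ R // @RackIsomorphic (Set.range ⇑f) D (rangeShelf f) Rack.toShelf} ×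
      {g : Equiv.Perm D // ∀ x y : D, g (x ◃ y) = g x ◃ g y}) :
    {h : D →◃ R // Function.Injective ⇑h} × {k : C →◃ D // Function.Surjective ⇑k} :=
  ⟨⟨injOf p.1.1 p.1.2 p.2.1 p.2.2, injOf_injective p.1.1 p.1.2 p.2.1 p.2.2⟩,
   ⟨surOf p.1.1 p.1.2 p.2.1 p.2.2, surOf_surjective p.1.1 p.1.2 p.2.1 p.2.2⟩⟩

theorem auxF_comp
    (p : {f : C →◃ R // @RackIsomorphic (Set.range ⇑f) D (rangeShelf f) Rack.toShelf} ×
      {g : Equiv.Perm D // ∀ x y : D, g (x ◃ y) = g x ◃ g y}) (c : C) :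
    (auxF p).1.1 ((auxF p).2.1 c) = p.1.1 c := by
  show ((p.1.2.choose.symm (p.2.1.symm (p.2.1 (p.1.2.choose
    ⟨p.1.1 c, Set.mem_range_self c⟩)))) : R) = p.1.1 c
  rw [Equiv.symm_apply_apply, Equiv.symm_apply_apply]

theorem auxF_bijective :
    Function.Bijective (auxF (C := C) (R := R) (D := D)) := by
  constructor
  · rintro ⟨⟨f₁, hf₁⟩, ⟨g₁, hg₁⟩⟩ ⟨⟨f₂, hf₂⟩, ⟨g₂, hg₂⟩⟩ h
    have hff : f₁ = f₂ := by
      apply DFunLike.ext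
      intro c
      rw [← auxF_comp (⟨⟨f₁, hf₁⟩, ⟨g₁, hg₁⟩⟩) c, ← auxF_comp (⟨⟨f₂, hf₂⟩, ⟨g₂, hg₂⟩⟩) c, h]
    subst hff
    have hpf : hf₂ = hf₁ := rfl
    subst hpf
    have hgg : g₁ = g₂ := by
      have hI : ∀ d, ((hf₂.choose.symm (g₁.symm d)) : R) = ((hf₂.choose.symm (g₂.symm d)) : R) :=
        fun d => congrFun (congrArg (fun (j : D →◃ R) => ⇑j) (congrArg Subtype.val (congrArg Prod.fst h))) d
      have : ∀ d, g₁.symm d = g₂.symm d := fun d =>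
        hf₂.choose.symm.injective (Subtype.ext (hI d))
      have hsym : g₁.symm = g₂.symm := Equiv.ext this
      rw [← g₁.symm_symm, ← g₂.symm_symm, hsym]
    subst hgg
    rfl
  · rintro ⟨⟨i, hi⟩, ⟨s, hs⟩⟩
    refine ⟨⟨⟨i.comp s, rackIso_comp i hi s hs⟩,
      ⟨((ibarE i hi s hs).trans (rackIso_comp i hi s hs).choose).symm, gOf_act i hi s hs⟩⟩, ?_⟩
    have hgsymm : (((ibarE i hi s hs).trans (rackIso_comp i hi s hs).choose).symm).symm
        = (ibarE i hi s hs).trans (rackIso_comp i hi s hs).choose := rfl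
    refine Prod.ext (Subtype.ext ?_) (Subtype.ext ?_)
    · apply DFunLike.ext
      intro d
      show (((rackIso_comp i hi s hs).choose.symm
        ((((ibarE i hi s hs).trans (rackIso_comp i hi s hs).choose).symm).symm d)) : R) = i d
      rw [hgsymm, Equiv.trans_apply, Equiv.symm_apply_apply]
      rfl
    · apply DFunLike.ext
      intro c
      show ((ibarE i hi s hs).trans (rackIso_comp i hi s hs).choose).symm
        ((rackIso_comp i hi s hs).choose ⟨(i.comp s) c, Set.mem_range_self c⟩) = s c
      have hx : (⟨(i.comp s) c, Set.mem_range_self c⟩ : Set.range ⇑(i.comp s))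
          = ibarE i hi s hs (s c) := Subtype.ext rfl
      rw [hx]
      exact Equiv.symm_apply_apply ((ibarE i hi s hs).trans (rackIso_comp i hi s hs).choose) (s c)


/-- `|Mor^D(C, R)| ⬝ |Aut(D)| = |Inj(D, R)| ⬝ |Sur(C, D)|` for finite racks
`C`, `R`, `D`, where `Mor^D(C, R)` is the set of morphisms `C → R` with image isomorphic
to `D`. -/
theorem morD_count_eq_inj_mul_sur {C R D : Type u} [Rack C] [Rack R] [Rack D]
    [Fintype C] [Fintype R] [Fintype D] :
    Nat.card {f : C →◃ R // @RackIsomorphic (Set.range ⇑f) D (rangeShelf f) Rack.toShelf} *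
      Nat.card {g : Equiv.Perm D // ∀ x y : D, g (x ◃ y) = g x ◃ g y} =
    Nat.card {h : D →◃ R // Function.Injective ⇑h} *
      Nat.card {k : C →◃ D // Function.Surjective ⇑k} := by
  rw [← Nat.card_prod, ← Nat.card_prod]
  exact Nat.card_congr (Equiv.ofBijective _ auxF_bijective)
end

section
/- Let R be a finite rack decomposed into two disjoint nonempty subracks S and T. Then every maximal connected subrack of R is contained in S or in T, and the maximal connected subracks of R are precisely the maximal connected subracks of S together with the maximal connected subracks of T. -/
open Quandles

/-- A subset of a rack is a connected subrack if it is a subrack that is connected as a rack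
with the induced structure. -/
def IsConnectedSubrack {R : Type*} [Rack R] (M : Set R) : Prop :=
  ∃ h : IsSubrack M, @IsConnectedRack ↥M (Subrack.rack M h)

/-- `M` is a maximal connected subrack among the connected subracks contained in `U`. -/
def IsMaxConnWithin {R : Type*} [Rack R] (U M : Set R) : Prop :=
  M ⊆ U ∧ IsConnectedSubrack M ∧
    ∀ M' : Set R, IsConnectedSubrack M' → M' ⊆ U → M ⊆ M' → M = M'


private theorem conn_sub_aux {R : Type*} [Rack R] {S T : Set R}
    (hdec : IsDecomposition R S T) {M : Set R} (hM : IsConnectedSubrack M) :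
    M ⊆ S ∨ M ⊆ T := by
  obtain ⟨hsub, hne, hconn⟩ := hM
  letI inst := Subrack.rack M hsub
  have memT_iff : ∀ b : R, b ∈ T ↔ b ∉ S := by
    intro b
    constructor
    · intro hb hs; exact hdec.disjoint.le_bot ⟨hs, hb⟩
    · intro hb
      have := Set.mem_univ b
      rw [← hdec.union] at this
      rcases this with h | h
      · exact absurd h hb
      · exact h
  have key : ∀ a b : R, (b ∈ S ↔ a ◃ b ∈ S) := by
    intro a b
    have gen : ∀ (U : Set R), IsSubrack U → a ∈ U → (b ∈ U ↔ a ◃ b ∈ U) := by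
      intro U hU ha
      constructor
      · intro hb
        have := hU a ha
        exact this ▸ ⟨b, hb, rfl⟩
      · intro hb
        have h := hU a ha
        rw [← h] at hb
        obtain ⟨u, hu, hequ⟩ := hb
        rwa [← (Rack.left_cancel a).mp hequ]
    have := Set.mem_univ a
    rw [← hdec.union] at this
    rcases this with h | h
    · exact gen S hdec.subrack_left h
    · have := gen T hdec.subrack_right h
      rw [memT_iff, memT_iff] at this
      tauto
  have inv_pres : ∀ g ∈ Inn ↥M, ∀ x : M, ((x : R) ∈ S ↔ ((g x : M) : R) ∈ S) := by
    intro g hg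
    refine Subgroup.closure_induction (fun p hp x => ?_) (fun x => Iff.rfl)
      (fun p q _ _ ihp ihq x => ?_) (fun p _ ihp x => ?_) hg
    · obtain ⟨m, rfl⟩ := hp
      exact key m.1 x.1
    · exact (ihq x).trans (ihp (q x))
    · have := ihp (p⁻¹ x)
      simp only [Equiv.Perm.coe_inv, Equiv.apply_symm_apply] at this
      exact this.symm
  by_contra hcon
  push_neg at hcon
  obtain ⟨h1, h2⟩ := hcon
  obtain ⟨x, hxM, hxS⟩ := Set.not_subset.mp h1
  obtain ⟨y, hyM, hyT⟩ := Set.not_subset.mp h2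
  have hyS : y ∈ S := by
    have := Set.mem_univ y
    rw [← hdec.union] at this
    rcases this with h | h
    · exact h
    · exact absurd h hyT
  obtain ⟨g, hg, hgx⟩ := hconn ⟨y, hyM⟩ ⟨x, hxM⟩
  have := inv_pres g hg ⟨y, hyM⟩
  rw [hgx] at this
  exact hxS (this.mp hyS)

private theorem conn_nonempty {R : Type*} [Rack R] {M : Set R}
    (hM : IsConnectedSubrack M) : M.Nonempty := by
  obtain ⟨hsub, ⟨x⟩, _⟩ := hM
  exact ⟨x.1, x.2⟩

/-- If a finite rack `R` is decomposed into disjoint nonempty subracks `S` and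
`T`, then every maximal connected subrack of `R` is contained in `S` or in `T`, and the maximal
connected subracks of `R` are precisely those of `S` together with those of `T`. -/
theorem max_connected_subracks_of_decomposition {R : Type*} [Rack R] [Fintype R]
    {S T : Set R} (hdec : IsDecomposition R S T) :
    (∀ M : Set R, IsMaxConnWithin Set.univ M → M ⊆ S ∨ M ⊆ T) ∧
    (∀ M : Set R, IsMaxConnWithin Set.univ M ↔
      (IsMaxConnWithin S M ∨ IsMaxConnWithin T M)) := by
  have swap : IsDecomposition R T S :=
    ⟨hdec.subrack_right, hdec.subrack_left, hdec.nonempty_right, hdec.nonempty_left,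
     hdec.disjoint.symm, by rw [Set.union_comm]; exact hdec.union⟩
  have half : ∀ (S T : Set R), IsDecomposition R S T → ∀ M : Set R,
      IsMaxConnWithin S M → IsMaxConnWithin Set.univ M := by
    intro S T hdec M hM
    refine ⟨Set.subset_univ _, hM.2.1, fun M' hc _ hMM => ?_⟩
    rcases conn_sub_aux hdec hc with hS' | hT'
    · exact hM.2.2 M' hc hS' hMM
    · exfalso
      obtain ⟨x, hx⟩ := conn_nonempty hM.2.1
      exact hdec.disjoint.le_bot ⟨hM.1 hx, hT' (hMM hx)⟩
  constructor
  · intro M hM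
    exact conn_sub_aux hdec hM.2.1
  · intro M
    constructor
    · intro hM
      rcases conn_sub_aux hdec hM.2.1 with hS | hT
      · exact Or.inl ⟨hS, hM.2.1, fun M' hc _ hMM =>
          hM.2.2 M' hc (Set.subset_univ _) hMM⟩
      · exact Or.inr ⟨hT, hM.2.1, fun M' hc _ hMM =>
          hM.2.2 M' hc (Set.subset_univ _) hMM⟩
    · rintro (hM | hM)
      · exact half S T hdec M hM
      · exact half T S swap M hM
end

section
/- Let (R, ⊳) be a connected rack, fix x ∈ R, let G = Inn(R) be the inner automorphism group of R, and let H ≤ G be the stabilizer of x. Then the operation αH ⊳ βH := (α ℓ_x α⁻¹ β)H on the coset space G/H is well-defined and makes G/H a rack, and the evaluation map G/H → R, αH ↦ α(x), is a rack isomorphism. -/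
open Quandles

lemma inn_hom {R : Type*} [Rack R] {g : Equiv.Perm R} (hg : g ∈ Inn R) :
    ∀ a b : R, g (a ◃ b) = g a ◃ g b := by
  induction hg using Subgroup.closure_induction with
  | mem g hg =>
    obtain ⟨y, rfl⟩ := hg
    intro a b
    simp only [Rack.act'_apply]
    exact Shelf.self_distrib
  | one => intro a b; rfl
  | mul g h _ _ hg hh => intro a b; simp [Equiv.Perm.mul_apply, hh, hg]
  | inv g _ hg =>
    intro a b
    have := hg (g⁻¹ a) (g⁻¹ b)
    simp only [Equiv.Perm.coe_inv, Equiv.apply_symm_apply] at this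
    rw [← this]
    simp [Equiv.Perm.coe_inv]

/-- For a connected rack `R`, `x ∈ R`, `G = Inn(R)` and `H` the stabilizer of
`x`, the operation `αH ⊳ βH = (α ℓₓ α⁻¹ β)H` is well-defined on `G/H`, makes it a rack, and
evaluation at `x` is a rack isomorphism `G/H ≅ R`. -/
theorem connected_rack_coset_model {R : Type*} [Rack R] (hR : IsConnectedRack R) (x : R)
    (ℓx : ↥(Inn R)) (hℓx : (ℓx : Equiv.Perm R) = Rack.act' x) :
    ∃ op : (↥(Inn R) ⧸ MulAction.stabilizer (↥(Inn R)) x) →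
        (↥(Inn R) ⧸ MulAction.stabilizer (↥(Inn R)) x) →
        (↥(Inn R) ⧸ MulAction.stabilizer (↥(Inn R)) x),
      (∀ α β : ↥(Inn R), op ↑α ↑β = ↑(α * ℓx * α⁻¹ * β)) ∧
      (∀ a, Function.Bijective (op a)) ∧
      (∀ a b c, op a (op b c) = op (op a b) (op a c)) ∧
      ∃ e : (↥(Inn R) ⧸ MulAction.stabilizer (↥(Inn R)) x) ≃ R,
        (∀ α : ↥(Inn R), e ↑α = (α : Equiv.Perm R) x) ∧
        (∀ a b, e (op a b) = e a ◃ e b) := by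
  let H := MulAction.stabilizer (↥(Inn R)) x
  -- the evaluation map
  have hwd : ∀ α β : ↥(Inn R), (QuotientGroup.leftRel H) α β → (α : Equiv.Perm R) x = (β : Equiv.Perm R) x := by
    intro α β hab'
    have : ((α⁻¹ * β : ↥(Inn R)) : Equiv.Perm R) x = x := QuotientGroup.leftRel_apply.mp hab'
    have h2 : ((α : Equiv.Perm R)⁻¹ * (β : Equiv.Perm R)) x = x := this
    have := congrArg (α : Equiv.Perm R) h2
    simpa [Equiv.Perm.mul_apply] using this.symm
  let q : (↥(Inn R) ⧸ H) → R := fun a => Quotient.liftOn' a (fun α => (α : Equiv.Perm R) x) hwd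
  have hq : ∀ α : ↥(Inn R), q ↑α = (α : Equiv.Perm R) x := fun α => rfl
  have hqbij : Function.Bijective q := by
    constructor
    · intro a b
      induction a using Quotient.inductionOn' with | h α =>
      induction b using Quotient.inductionOn' with | h β =>
      intro hab
      rw [hq, hq] at hab
      apply Quotient.sound'
      rw [QuotientGroup.leftRel_apply]
      show ((α⁻¹ * β : ↥(Inn R)) : Equiv.Perm R) x = x
      show ((α : Equiv.Perm R)⁻¹ * (β : Equiv.Perm R)) x = x
      rw [Equiv.Perm.mul_apply, ← hab, Equiv.Perm.coe_inv, Equiv.symm_apply_apply]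
    · intro y
      obtain ⟨g, hg, hgx⟩ := hR.2 x y
      exact ⟨↑(⟨g, hg⟩ : ↥(Inn R)), hgx⟩
  let e : (↥(Inn R) ⧸ H) ≃ R := Equiv.ofBijective q hqbij
  have he : ∀ α : ↥(Inn R), e ↑α = (α : Equiv.Perm R) x := hq
  let op : (↥(Inn R) ⧸ H) → (↥(Inn R) ⧸ H) → (↥(Inn R) ⧸ H) := fun a b => e.symm (e a ◃ e b)
  have hop : ∀ a b, e (op a b) = e a ◃ e b := fun a b => e.apply_symm_apply _
  refine ⟨op, ?_, ?_, ?_, e, he, hop⟩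
  · intro α β
    apply e.injective
    rw [hop, he, he, he]
    show _ = ((↑(α * ℓx * α⁻¹ * β) : Equiv.Perm R)) x
    simp only [Subgroup.coe_mul, Equiv.Perm.mul_apply, hℓx, Rack.act'_apply]
    rw [inn_hom α.2]
    congr 1
    have : ((α⁻¹ : ↥(Inn R)) : Equiv.Perm R) = (α : Equiv.Perm R)⁻¹ := rfl
    rw [this, Equiv.Perm.coe_inv, Equiv.apply_symm_apply]
  · intro a
    have : (op a) = e.symm ∘ (fun y => e a ◃ y) ∘ e := rfl
    rw [this]
    exact e.symm.bijective.comp ((Rack.act' (e a)).bijective.comp e.bijective)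
  · intro a b c
    apply e.injective
    simp only [hop]
    exact Shelf.self_distrib
end
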